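/- arXiv:2312.02393 — 7 statements merged into one kernel-verified Lean document; each statement's English description precedes it below -/
import Mathlib

section
/- Let f ∈ L¹(ℝ²) and g ∈ L∞(ℝ × [0,π)). Then (Bg) * f = B(g * Rf), where on the left * denotes convolution on ℝ² and on the right * denotes convolution in the first (radial) variable for each fixed angle. -/
open MeasureTheory Real

noncomputable def Teqv (t θ : ℝ) : (ℝ × ℝ) ≃ᵐ (ℝ × ℝ) :=
  (MeasurableEquiv.prodCongr (Homeomorph.subLeft t).toMeasurableEquiv (MeasurableEquiv.refl ℝ)).trans
    (Complex.measurableEquivRealProd.symm.trans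
      (((rotation (Circle.exp θ)).toMeasurableEquiv).trans Complex.measurableEquivRealProd))

lemma Teqv_apply (t θ : ℝ) (w : ℝ × ℝ) :
    Teqv t θ w = ((t - w.1) * Real.cos θ - w.2 * Real.sin θ,
      (t - w.1) * Real.sin θ + w.2 * Real.cos θ) := by
  show Complex.measurableEquivRealProd ((rotation (Circle.exp θ))
      (Complex.measurableEquivRealProd.symm
        ((MeasurableEquiv.prodCongr (Homeomorph.subLeft t).toMeasurableEquiv
          (MeasurableEquiv.refl ℝ)) w))) = _
  have h1 : (MeasurableEquiv.prodCongr (Homeomorph.subLeft t).toMeasurableEquiv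
      (MeasurableEquiv.refl ℝ)) w = (t - w.1, w.2) := rfl
  rw [h1, Complex.measurableEquivRealProd_symm_apply, rotation_apply, Circle.coe_exp,
    Complex.exp_mul_I, Complex.measurableEquivRealProd_apply]
  simp [Complex.mul_re, Complex.mul_im, Complex.cos_ofReal_re, Complex.sin_ofReal_re, Prod.ext_iff]
  constructor <;> ring

lemma Teqv_mp (t θ : ℝ) : MeasurePreserving (Teqv t θ) volume volume := by
  have h1 : MeasurePreserving (MeasurableEquiv.prodCongr (Homeomorph.subLeft t).toMeasurableEquiv
      (MeasurableEquiv.refl ℝ)) (volume : Measure (ℝ × ℝ)) volume := by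
    rw [Measure.volume_eq_prod]
    exact (Measure.measurePreserving_sub_left volume t).prod (MeasurePreserving.id volume)
  have h2 : MeasurePreserving ((rotation (Circle.exp θ)).toMeasurableEquiv)
      (volume : Measure ℂ) volume := (rotation (Circle.exp θ)).measurePreserving
  exact ((Complex.volume_preserving_equiv_real_prod.comp
    (h2.comp Complex.volume_preserving_equiv_real_prod.symm)).comp h1)

lemma prodNullRight {α β : Type*} [MeasurableSpace α] [MeasurableSpace β]
    (μ : Measure α) (ν : Measure β) [SFinite μ] [SFinite ν] {s : Set (α × β)}
    (hs : MeasurableSet s) :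
    μ.prod ν s = 0 ↔ ∀ᵐ y ∂ν, μ {x | (x, y) ∈ s} = 0 := by
  have h : μ.prod ν s = (ν.prod μ) (Prod.swap ⁻¹' s) := by
    rw [← Measure.prod_swap, Measure.map_apply measurable_swap hs]
  rw [h, Measure.measure_prod_null (measurable_swap hs)]
  rfl

lemma affineNull {a b : ℝ} (hb : b ≠ 0) {A : Set ℝ} (hA : volume A = 0) :
    volume ((fun u : ℝ => a + b * u) ⁻¹' A) = 0 := by
  have hqmp : Measure.QuasiMeasurePreserving (fun u : ℝ => a + b * u) volume volume := by
    refine ⟨by fun_prop, ?_⟩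
    have : (fun u : ℝ => a + b * u) = (fun v : ℝ => a + v) ∘ (fun u : ℝ => b * u) := rfl
    rw [this, ← Measure.map_map (by fun_prop) (by fun_prop),
      Real.map_volume_mul_left hb, Measure.map_smul,
      map_add_left_eq_self volume a]
    exact Measure.smul_absolutelyContinuous
  exact hqmp.preimage_null hA

lemma planeNull (c sn x y : ℝ) (h : sn ≠ 0) {A : Set ℝ} (hA : volume A = 0)
    (hAm : MeasurableSet A) :
    volume {p : ℝ × ℝ | (x - p.1) * c + (y - p.2) * sn ∈ A} = 0 := by
  rw [Measure.volume_eq_prod]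
  have hms : MeasurableSet {p : ℝ × ℝ | (x - p.1) * c + (y - p.2) * sn ∈ A} :=
    (by fun_prop : Measurable fun p : ℝ × ℝ => (x - p.1) * c + (y - p.2) * sn) hAm
  rw [Measure.measure_prod_null hms]
  refine Filter.Eventually.of_forall fun p₁ => ?_
  show volume (Prod.mk p₁ ⁻¹' {p : ℝ × ℝ | (x - p.1) * c + (y - p.2) * sn ∈ A}) = 0
  have : (Prod.mk p₁ ⁻¹' {p : ℝ × ℝ | (x - p.1) * c + (y - p.2) * sn ∈ A})
      = (fun u : ℝ => ((x - p₁) * c + y * sn) + (-sn) * u) ⁻¹' A := by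
    ext u; simp [Set.mem_preimage]; ring_nf
  rw [this]
  exact affineNull (neg_ne_zero.2 h) hA

lemma intFst {α β : Type*} [MeasurableSpace α] [MeasurableSpace β]
    {μ : Measure α} {ν : Measure β} [SFinite μ] [SFinite ν] [IsFiniteMeasure ν]
    {h : α → ℝ} (hh : Integrable h μ) :
    Integrable (fun z : α × β => h z.1) (μ.prod ν) := by
  have hmap : Measure.map Prod.fst (μ.prod ν) = (ν Set.univ) • μ := Measure.map_fst_prod
  have hint : Integrable h ((ν Set.univ) • μ) := hh.smul_measure (measure_ne_top ν _)
  rw [← hmap] at hint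
  exact hint.comp_measurable measurable_fst

/-- For `f ∈ L¹(ℝ²)` and `g ∈ L∞(ℝ × [0,π))`, one has `(Bg) * f = B(g * Rf)`, where on the
left `*` is convolution on `ℝ²` and on the right `*` is convolution in the radial variable
for each fixed angle. -/
theorem statement10 (f g : ℝ × ℝ → ℝ) (hf : Integrable f)
    (hg : MemLp g ⊤ (volume.restrict (Set.univ ×ˢ Set.Ico 0 Real.pi))) :
    ∀ x y : ℝ,
      (∫ p : ℝ × ℝ,
          ((1 / Real.pi) * ∫ θ in Set.Ico 0 Real.pi,
            g ((x - p.1) * Real.cos θ + (y - p.2) * Real.sin θ, θ)) * f p) =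
        (1 / Real.pi) * ∫ θ in Set.Ico 0 Real.pi,
          ∫ S : ℝ, g (S, θ) *
            ∫ s : ℝ, f ((x * Real.cos θ + y * Real.sin θ - S) * Real.cos θ - s * Real.sin θ,
              (x * Real.cos θ + y * Real.sin θ - S) * Real.sin θ + s * Real.cos θ) := by
  intro x y
  set μr : Measure (ℝ × ℝ) := volume.restrict (Set.univ ×ˢ Set.Ico 0 Real.pi) with hμrdef
  set ν : Measure ℝ := volume.restrict (Set.Ico 0 Real.pi) with hνdef
  have hμr : μr = (volume : Measure ℝ).prod ν := by
    rw [hμrdef, hνdef, Measure.volume_eq_prod, ← Measure.prod_restrict, Measure.restrict_univ]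
  haveI : IsFiniteMeasure ν := by
    constructor
    rw [hνdef, Measure.restrict_apply_univ, Real.volume_Ico]
    exact ENNReal.ofReal_lt_top
  -- bounded measurable representative of g
  obtain ⟨hgm, hgsn⟩ := hg
  set C : ℝ := (eLpNorm g ⊤ μr).toReal with hC
  have hC0 : 0 ≤ C := ENNReal.toReal_nonneg
  have hlt : eLpNormEssSup g μr < ⊤ := by rwa [← eLpNorm_exponent_top]
  have hgbd : ∀ᵐ q ∂μr, ‖g q‖ ≤ C := by
    filter_upwards [ae_le_eLpNormEssSup (f := g) (μ := μr)] with q hq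
    have h2 := ENNReal.toReal_mono hlt.ne hq
    rw [hC, eLpNorm_exponent_top]
    simpa using h2
  set g₁ : ℝ × ℝ → ℝ := hgm.mk g with hg₁def
  have hg₁m : StronglyMeasurable g₁ := hgm.stronglyMeasurable_mk
  have heq1 : g =ᵐ[μr] g₁ := hgm.ae_eq_mk
  set g₂ : ℝ × ℝ → ℝ := fun q => if ‖g₁ q‖ ≤ C then g₁ q else 0 with hg₂def
  have hg₂m : Measurable g₂ :=
    Measurable.ite (measurableSet_le hg₁m.measurable.norm measurable_const)
      hg₁m.measurable measurable_const
  have hg₂bd : ∀ q, ‖g₂ q‖ ≤ C := by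
    intro q
    show ‖if ‖g₁ q‖ ≤ C then g₁ q else 0‖ ≤ C
    split_ifs with h
    · exact h
    · simpa using hC0
  have heq2 : g =ᵐ[μr] g₂ := by
    filter_upwards [heq1, hgbd] with q h1 h2
    show g q = if ‖g₁ q‖ ≤ C then g₁ q else 0
    rw [if_pos (by rw [← h1]; exact h2), ← h1]
  -- measurable superset of the bad set
  obtain ⟨N, hNsub, hNm, hN0⟩ := exists_measurable_superset_of_null (ae_iff.1 heq2)
  have hgN : ∀ q, q ∉ N → g q = g₂ q := by
    intro q hq
    by_contra h
    exact hq (hNsub h)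
  have hN0' : ((volume : Measure ℝ).prod ν) N = 0 := by rw [← hμr]; exact hN0
  have hslice : ∀ᵐ θ ∂ν, volume {S : ℝ | (S, θ) ∈ N} = 0 :=
    (prodNullRight volume ν hNm).1 hN0'
  have hsin : ∀ᵐ θ ∂ν, Real.sin θ ≠ 0 := by
    rw [hνdef, ae_restrict_iff' measurableSet_Ico]
    have hsub : {θ : ℝ | ¬ (θ ∈ Set.Ico 0 Real.pi → Real.sin θ ≠ 0)} ⊆ {0} := by
      intro θ hθ
      simp only [Set.mem_setOf_eq, not_forall, not_not] at hθ
      obtain ⟨hmem, hz⟩ := hθ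
      rcases eq_or_lt_of_le hmem.1 with h0 | h0
      · simp [← h0]
      · exact absurd hz (ne_of_gt (Real.sin_pos_of_pos_of_lt_pi h0 hmem.2))
    rw [ae_iff]
    exact measure_mono_null hsub volume_singleton
  -- the key map
  set Φ : (ℝ × ℝ) × ℝ → ℝ × ℝ :=
    fun z => ((x - z.1.1) * Real.cos z.2 + (y - z.1.2) * Real.sin z.2, z.2) with hΦdef
  have hΦc : Continuous Φ := by rw [hΦdef]; fun_prop
  have hMm : MeasurableSet (Φ ⁻¹' N) := hΦc.measurable hNm
  have hM0 : ((volume : Measure (ℝ × ℝ)).prod ν) (Φ ⁻¹' N) = 0 := by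
    refine (prodNullRight volume ν hMm).2 ?_
    filter_upwards [hslice, hsin] with θ h1 h2
    have hAm : MeasurableSet {S : ℝ | (S, θ) ∈ N} :=
      (measurable_id.prodMk measurable_const) hNm
    have hset : {p : ℝ × ℝ | (p, θ) ∈ Φ ⁻¹' N}
        = {p : ℝ × ℝ | (x - p.1) * Real.cos θ + (y - p.2) * Real.sin θ ∈ {S : ℝ | (S, θ) ∈ N}} := rfl
    rw [hset]
    exact planeNull (Real.cos θ) (Real.sin θ) x y h2 h1 hAm
  -- step A : for every θ, the change of variables
  have stepA : ∀ θ : ℝ,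
      (∫ p : ℝ × ℝ, g₂ ((x - p.1) * Real.cos θ + (y - p.2) * Real.sin θ, θ) * f p)
      = ∫ S : ℝ, g₂ (S, θ) *
          ∫ s : ℝ, f ((x * Real.cos θ + y * Real.sin θ - S) * Real.cos θ - s * Real.sin θ,
            (x * Real.cos θ + y * Real.sin θ - S) * Real.sin θ + s * Real.cos θ) := by
    intro θ
    set t : ℝ := x * Real.cos θ + y * Real.sin θ with htdef
    have hint1 : Integrable
        (fun p : ℝ × ℝ => g₂ ((x - p.1) * Real.cos θ + (y - p.2) * Real.sin θ, θ) * f p) volume :=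
      hf.bdd_mul ((hg₂m.comp
        (by fun_prop : Measurable fun p : ℝ × ℝ =>
          ((x - p.1) * Real.cos θ + (y - p.2) * Real.sin θ, θ))).aestronglyMeasurable)
        (c := C) (Filter.Eventually.of_forall fun p => hg₂bd _)
    have hkey : ∀ w : ℝ × ℝ,
        (x - (Teqv t θ w).1) * Real.cos θ + (y - (Teqv t θ w).2) * Real.sin θ = w.1 := by
      intro w
      rw [Teqv_apply]
      have h1 : Real.sin θ ^ 2 + Real.cos θ ^ 2 = 1 := Real.sin_sq_add_cos_sq θ
      simp only [htdef]
      linear_combination (w.1 - (x * Real.cos θ + y * Real.sin θ)) * h1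
    have e1 : (∫ p : ℝ × ℝ, g₂ ((x - p.1) * Real.cos θ + (y - p.2) * Real.sin θ, θ) * f p)
        = ∫ w : ℝ × ℝ, g₂ ((x - (Teqv t θ w).1) * Real.cos θ
            + (y - (Teqv t θ w).2) * Real.sin θ, θ) * f (Teqv t θ w) :=
      ((Teqv_mp t θ).integral_comp' _).symm
    have e2 : (∫ w : ℝ × ℝ, g₂ ((x - (Teqv t θ w).1) * Real.cos θ
            + (y - (Teqv t θ w).2) * Real.sin θ, θ) * f (Teqv t θ w))
        = ∫ w : ℝ × ℝ, g₂ (w.1, θ) * f (Teqv t θ w) := by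
      refine integral_congr_ae (Filter.Eventually.of_forall fun w => ?_)
      dsimp only
      rw [hkey w]
    have hint2 : Integrable (fun w : ℝ × ℝ => g₂ (w.1, θ) * f (Teqv t θ w)) volume := by
      have h := ((Teqv_mp t θ).integrable_comp_emb (Teqv t θ).measurableEmbedding).2 hint1
      refine h.congr (Filter.Eventually.of_forall fun w => ?_)
      simp only [Function.comp_apply]
      rw [hkey w]
    have e3 : (∫ w : ℝ × ℝ, g₂ (w.1, θ) * f (Teqv t θ w))
        = ∫ S : ℝ, ∫ s : ℝ, g₂ ((S, s).1, θ) * f (Teqv t θ (S, s)) := by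
      rw [Measure.volume_eq_prod] at hint2 ⊢
      exact MeasureTheory.integral_prod _ hint2
    have e4 : (∫ S : ℝ, ∫ s : ℝ, g₂ ((S, s).1, θ) * f (Teqv t θ (S, s)))
        = ∫ S : ℝ, g₂ (S, θ) * ∫ s : ℝ, f (Teqv t θ (S, s)) := by
      refine integral_congr_ae (Filter.Eventually.of_forall fun S => ?_)
      dsimp only
      exact integral_const_mul _ _
    have e5 : ∀ S s : ℝ, Teqv t θ (S, s) = ((t - S) * Real.cos θ - s * Real.sin θ,
        (t - S) * Real.sin θ + s * Real.cos θ) := fun S s => Teqv_apply t θ (S, s)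
    rw [e1, e2, e3, e4]
    refine integral_congr_ae (Filter.Eventually.of_forall fun S => ?_)
    dsimp only
    congr 1
    refine integral_congr_ae (Filter.Eventually.of_forall fun s => ?_)
    dsimp only
    rw [e5]
  -- integrability for Fubini swap
  have hswap : Integrable
      (fun z : (ℝ × ℝ) × ℝ =>
        g₂ ((x - z.1.1) * Real.cos z.2 + (y - z.1.2) * Real.sin z.2, z.2) * f z.1)
      ((volume : Measure (ℝ × ℝ)).prod ν) := by
    have h1 : Integrable (fun z : (ℝ × ℝ) × ℝ => f z.1)
        ((volume : Measure (ℝ × ℝ)).prod ν) := intFst hf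
    exact h1.bdd_mul ((hg₂m.comp hΦc.measurable).aestronglyMeasurable)
      (c := C) (Filter.Eventually.of_forall fun z => hg₂bd _)
  have hswap' : (∫ p : ℝ × ℝ, ∫ θ : ℝ,
        g₂ ((x - p.1) * Real.cos θ + (y - p.2) * Real.sin θ, θ) * f p ∂ν)
      = ∫ θ : ℝ, ∫ p : ℝ × ℝ,
        g₂ ((x - p.1) * Real.cos θ + (y - p.2) * Real.sin θ, θ) * f p ∂volume ∂ν :=
    integral_integral_swap hswap
  -- replacement on the left
  have hLrep : ∀ᵐ p ∂(volume : Measure (ℝ × ℝ)),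
      (∫ θ in Set.Ico 0 Real.pi, g ((x - p.1) * Real.cos θ + (y - p.2) * Real.sin θ, θ))
      = ∫ θ in Set.Ico 0 Real.pi, g₂ ((x - p.1) * Real.cos θ + (y - p.2) * Real.sin θ, θ) := by
    filter_upwards [Measure.measure_ae_null_of_prod_null hM0] with p hp
    rw [← hνdef]
    refine integral_congr_ae ?_
    have hae : ∀ᵐ θ ∂ν, (p, θ) ∉ Φ ⁻¹' N := by
      rw [ae_iff]
      simpa [Set.preimage] using hp
    filter_upwards [hae] with θ hθ
    exact hgN _ hθ
  -- replacement on the right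
  have hRrep : ∀ᵐ θ ∂ν,
      (∫ S : ℝ, g₂ (S, θ) *
          ∫ s : ℝ, f ((x * Real.cos θ + y * Real.sin θ - S) * Real.cos θ - s * Real.sin θ,
            (x * Real.cos θ + y * Real.sin θ - S) * Real.sin θ + s * Real.cos θ))
      = ∫ S : ℝ, g (S, θ) *
          ∫ s : ℝ, f ((x * Real.cos θ + y * Real.sin θ - S) * Real.cos θ - s * Real.sin θ,
            (x * Real.cos θ + y * Real.sin θ - S) * Real.sin θ + s * Real.cos θ) := by
    filter_upwards [hslice] with θ hθ
    refine integral_congr_ae ?_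
    have hae : ∀ᵐ S ∂(volume : Measure ℝ), (S, θ) ∉ N := by
      rw [ae_iff]
      simpa using hθ
    filter_upwards [hae] with S hS
    rw [hgN _ hS]
  -- put it together
  calc
    (∫ p : ℝ × ℝ, ((1 / Real.pi) * ∫ θ in Set.Ico 0 Real.pi,
          g ((x - p.1) * Real.cos θ + (y - p.2) * Real.sin θ, θ)) * f p)
        = (1 / Real.pi) * ∫ p : ℝ × ℝ, (∫ θ in Set.Ico 0 Real.pi,
            g ((x - p.1) * Real.cos θ + (y - p.2) * Real.sin θ, θ)) * f p := by
          rw [← integral_const_mul]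
          refine integral_congr_ae (Filter.Eventually.of_forall fun p => ?_)
          ring
    _ = (1 / Real.pi) * ∫ p : ℝ × ℝ, (∫ θ in Set.Ico 0 Real.pi,
            g₂ ((x - p.1) * Real.cos θ + (y - p.2) * Real.sin θ, θ)) * f p := by
          congr 1
          refine integral_congr_ae ?_
          filter_upwards [hLrep] with p hp
          rw [hp]
    _ = (1 / Real.pi) * ∫ p : ℝ × ℝ, ∫ θ : ℝ,
            g₂ ((x - p.1) * Real.cos θ + (y - p.2) * Real.sin θ, θ) * f p ∂ν := by
          congr 1
          refine integral_congr_ae (Filter.Eventually.of_forall fun p => ?_)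
          dsimp only
          rw [← integral_mul_const]
    _ = (1 / Real.pi) * ∫ θ : ℝ, ∫ p : ℝ × ℝ,
            g₂ ((x - p.1) * Real.cos θ + (y - p.2) * Real.sin θ, θ) * f p ∂volume ∂ν := by
          rw [hswap']
    _ = (1 / Real.pi) * ∫ θ : ℝ, (∫ S : ℝ, g₂ (S, θ) *
            ∫ s : ℝ, f ((x * Real.cos θ + y * Real.sin θ - S) * Real.cos θ - s * Real.sin θ,
              (x * Real.cos θ + y * Real.sin θ - S) * Real.sin θ + s * Real.cos θ)) ∂ν := by
          congr 1
          exact integral_congr_ae (Filter.Eventually.of_forall fun θ => stepA θ)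
    _ = (1 / Real.pi) * ∫ θ in Set.Ico 0 Real.pi, ∫ S : ℝ, g (S, θ) *
            ∫ s : ℝ, f ((x * Real.cos θ + y * Real.sin θ - S) * Real.cos θ - s * Real.sin θ,
              (x * Real.cos θ + y * Real.sin θ - S) * Real.sin θ + s * Real.cos θ) := by
          rw [hνdef]
          congr 1
          rw [← hνdef]
          exact integral_congr_ae hRrep
end

section
/- Fourier slice theorem in two dimensions: for f ∈ L¹(ℝ²), the one-dimensional Fourier transform of the Radon transform in the radial variable satisfies F(Rf)(S,θ) = Ff(S·cos θ, S·sin θ) for all (S,θ) ∈ ℝ × [0,π), where Ff is the two-dimensional Fourier transform of f. -/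
open MeasureTheory Real

/-- Fourier slice theorem in two dimensions: for `f ∈ L¹(ℝ²)`,
`F(Rf)(S,θ) = Ff(S·cos θ, S·sin θ)` for all `(S,θ) ∈ ℝ × [0,π)`, where `F` on the left is
the one-dimensional Fourier transform in the radial variable and `Ff` is the
two-dimensional Fourier transform of `f`. -/
theorem statement11 (f : ℝ × ℝ → ℝ) (hf : Integrable f)
    (S θ : ℝ) (hθ : θ ∈ Set.Ico 0 Real.pi) :
    (∫ t : ℝ,
        (↑(∫ s : ℝ, f (t * Real.cos θ - s * Real.sin θ, t * Real.sin θ + s * Real.cos θ)) : ℂ) *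
          Complex.exp (-Complex.I * (S * t))) =
      ∫ p : ℝ × ℝ, (f p : ℂ) *
        Complex.exp (-Complex.I * (p.1 * (S * Real.cos θ) + p.2 * (S * Real.sin θ))) := by
  set c := Real.cos θ with hc
  set sn := Real.sin θ with hsn
  have hcs : c ^ 2 + sn ^ 2 = 1 := by
    simpa [hc, hsn, add_comm] using Real.sin_sq_add_cos_sq θ
  -- the rotation linear map
  set L : ℝ × ℝ →ₗ[ℝ] ℝ × ℝ :=
    Matrix.toLin (Module.Basis.finTwoProd ℝ) (Module.Basis.finTwoProd ℝ) !![c, -sn; sn, c] with hL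
  have hLapp : ∀ x : ℝ × ℝ, L x = (c * x.1 + -sn * x.2, sn * x.1 + c * x.2) := by
    intro x; rw [hL, Matrix.toLin_finTwoProd_apply]
  have hdet : LinearMap.det L = 1 := by
    rw [hL, LinearMap.det_toLin, Matrix.det_fin_two_of]
    nlinarith [hcs]
  have hdet0 : LinearMap.det L ≠ 0 := by rw [hdet]; norm_num
  have hcont : Continuous L := L.continuous_of_finiteDimensional
  have hinj : Function.Injective L := by
    have h1 := (LinearMap.equivOfDetNeZero L hdet0).injective
    have h2 : ∀ x, (LinearMap.equivOfDetNeZero L hdet0) x = L x := fun x =>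
      LinearEquiv.ofIsUnitDet_apply _ x
    intro x y hxy
    exact h1 (by rw [h2, h2, hxy])
  have hemb : MeasurableEmbedding L := hcont.measurableEmbedding hinj
  have hmap : Measure.map L volume = volume := by
    rw [Measure.map_linearMap_addHaar_eq_smul_addHaar volume hdet0, hdet]
    simp
  have hmp : MeasurePreserving L volume volume := ⟨hcont.measurable, hmap⟩
  -- integrability of f ∘ L
  have hfL : Integrable (fun x : ℝ × ℝ => f (L x)) := by
    rw [← hmp.integrable_comp_emb hemb] at hf
    exact hf
  -- the full integrand on the right, composed with L
  have key : (∫ p : ℝ × ℝ, (f p : ℂ) *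
        Complex.exp (-Complex.I * (p.1 * (S * c) + p.2 * (S * sn)))) =
      ∫ x : ℝ × ℝ, (f (L x) : ℂ) * Complex.exp (-Complex.I * (S * x.1)) := by
    rw [← hmp.integral_comp hemb
      (fun p : ℝ × ℝ => (f p : ℂ) * Complex.exp (-Complex.I * (p.1 * (S * c) + p.2 * (S * sn))))]
    refine integral_congr_ae (Filter.Eventually.of_forall fun x => ?_)
    simp only [hLapp]
    congr 2
    push_cast
    have h1 : ((c:ℂ)^2 + (sn:ℂ)^2) = 1 := by exact_mod_cast congrArg Complex.ofReal hcs
    linear_combination (-Complex.I * (S:ℂ) * (x.1:ℂ)) * h1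
  rw [key]
  have hmeas_e : AEStronglyMeasurable
      (fun x : ℝ × ℝ => Complex.exp (-Complex.I * (S * x.1))) volume :=
    (Complex.continuous_exp.comp (by fun_prop)).aestronglyMeasurable
  have hbd : ∀ x : ℝ × ℝ, ‖Complex.exp (-Complex.I * (S * x.1))‖ ≤ 1 := by
    intro x
    rw [Complex.norm_exp]
    simp
  have hint : Integrable
      (fun x : ℝ × ℝ => (f (L x) : ℂ) * Complex.exp (-Complex.I * (S * x.1))) := by
    have h := (hfL.ofReal (𝕜 := ℂ)).bdd_mul (c := 1) hmeas_e (Filter.Eventually.of_forall hbd)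
    exact h.congr (Filter.Eventually.of_forall fun x => mul_comm _ _)
  rw [MeasureTheory.Measure.volume_eq_prod ℝ ℝ] at hint
  rw [show (volume : Measure (ℝ × ℝ)) = (volume : Measure ℝ).prod volume from
    MeasureTheory.Measure.volume_eq_prod ℝ ℝ, integral_prod _ hint]
  refine integral_congr_ae (Filter.Eventually.of_forall fun t => ?_)
  simp only [hLapp]
  rw [integral_mul_const]
  congr 1
  rw [show (∫ a : ℝ, ((f (c * t + -sn * a, sn * t + c * a) : ℝ) : ℂ)) =
      ((∫ a : ℝ, f (c * t + -sn * a, sn * t + c * a) : ℝ) : ℂ) from integral_ofReal]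
  rw [Complex.ofReal_inj]
  refine integral_congr_ae (Filter.Eventually.of_forall fun s => ?_)
  exact congrArg f (Prod.ext_iff.mpr ⟨by ring, by ring⟩)
end

section
/- Filtered back projection formula: for f ∈ L¹(ℝ²) continuous with Ff ∈ L¹(ℝ²), one has f(x,y) = (1/(4π²)) ∫₀^π ∫_ℝ F(Rf)(S,θ) · |S| · e^{iS(x·cos θ + y·sin θ)} dS dθ for all (x,y) ∈ ℝ². -/
open MeasureTheory Real Set FourierTransform

noncomputable def rotEquiv (θ : ℝ) : (ℝ × ℝ) ≃ᵐ (ℝ × ℝ) :=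
  (Complex.measurableEquivRealProd.symm.trans
    (rotation (Circle.exp θ)).toMeasurableEquiv).trans Complex.measurableEquivRealProd

lemma rotEquiv_apply (θ : ℝ) (q : ℝ × ℝ) :
    rotEquiv θ q = (q.1 * Real.cos θ - q.2 * Real.sin θ, q.1 * Real.sin θ + q.2 * Real.cos θ) := by
  have h1 : Complex.measurableEquivRealProd.symm q = (q.1 + q.2 * Complex.I) := by
    apply Complex.ext <;>
      simp [Complex.measurableEquivRealProd, Complex.equivRealProd]
  simp only [rotEquiv, MeasurableEquiv.trans_apply, h1]
  have h2 : (rotation (Circle.exp θ)).toMeasurableEquiv (q.1 + q.2 * Complex.I)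
      = (Real.cos θ + Real.sin θ * Complex.I) * (q.1 + q.2 * Complex.I) := by
    simp [LinearIsometryEquiv.coe_toMeasurableEquiv, rotation_apply, Circle.coe_exp,
      Complex.exp_mul_I]
  rw [h2]
  ext <;> simp [Complex.measurableEquivRealProd, Complex.equivRealProd, Complex.add_re,
    Complex.mul_re, Complex.mul_im, Complex.cos_ofReal_re, Complex.sin_ofReal_re] <;> ring

lemma rotEquiv_measurePreserving (θ : ℝ) : MeasurePreserving (rotEquiv θ) volume volume :=
  (Complex.volume_preserving_equiv_real_prod.comp
    (rotation (Circle.exp θ)).measurePreserving).comp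
      Complex.volume_preserving_equiv_real_prod.symm

lemma fourierSlice (f : ℝ × ℝ → ℝ) (hf : Integrable f) (θ S : ℝ) :
    (∫ t : ℝ, (↑(∫ s : ℝ, f (t * Real.cos θ - s * Real.sin θ,
          t * Real.sin θ + s * Real.cos θ)) : ℂ) * Complex.exp (-Complex.I * (S * t)))
    = ∫ p : ℝ × ℝ, (f p : ℂ) *
        Complex.exp (-Complex.I * (p.1 * ((S * Real.cos θ : ℝ) : ℝ) + p.2 * ((S * Real.sin θ : ℝ)))) := by
  set Φ : ℝ × ℝ → ℂ := fun p => (f p : ℂ) *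
      Complex.exp (-Complex.I * (p.1 * ((S * Real.cos θ : ℝ)) + p.2 * ((S * Real.sin θ : ℝ)))) with hΦdef
  have hfC : Integrable (fun p : ℝ × ℝ => (f p : ℂ)) := hf.ofReal
  have hΦ : Integrable Φ := by
    have := hfC.bdd_mul (c := 1) (f := fun p : ℝ × ℝ =>
        Complex.exp (-Complex.I * (p.1 * ((S * Real.cos θ : ℝ)) + p.2 * ((S * Real.sin θ : ℝ)))))
      ?_ ?_
    · exact this.congr (Filter.Eventually.of_forall fun p => mul_comm _ _)
    · refine Continuous.aestronglyMeasurable (by fun_prop)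
    · refine Filter.Eventually.of_forall fun p => le_of_eq ?_
      rw [Complex.norm_exp]
      norm_num [Complex.mul_re]
  have key : ∀ q : ℝ × ℝ, Φ (rotEquiv θ q)
      = (f (q.1 * Real.cos θ - q.2 * Real.sin θ, q.1 * Real.sin θ + q.2 * Real.cos θ) : ℂ) *
        Complex.exp (-Complex.I * (S * q.1)) := by
    intro q
    rw [hΦdef, rotEquiv_apply]
    congr 2
    push_cast
    have : (q.1 * Real.cos θ - q.2 * Real.sin θ) * (S * Real.cos θ)
        + (q.1 * Real.sin θ + q.2 * Real.cos θ) * (S * Real.sin θ) = S * q.1 := by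
      linear_combination (S * q.1) * (Real.sin_sq_add_cos_sq θ)
    rw_mod_cast [this]
  have hrot := rotEquiv_measurePreserving θ
  have hcomp : (∫ p, Φ p) = ∫ q : ℝ × ℝ, Φ (rotEquiv θ q) :=
    (hrot.integral_comp (rotEquiv θ).measurableEmbedding Φ).symm
  have hΨ : Integrable (fun q : ℝ × ℝ =>
      (f (q.1 * Real.cos θ - q.2 * Real.sin θ, q.1 * Real.sin θ + q.2 * Real.cos θ) : ℂ) *
        Complex.exp (-Complex.I * (S * q.1))) := by
    have := ((hrot.integrable_comp_emb (rotEquiv θ).measurableEmbedding).2 hΦ)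
    exact this.congr (Filter.Eventually.of_forall fun q => key q)
  rw [hcomp]
  simp_rw [key]
  rw [show (volume : Measure (ℝ × ℝ)) = volume.prod volume from Measure.volume_eq_prod _ _] at hΨ ⊢
  rw [MeasureTheory.integral_prod _ hΨ]
  congr 1
  funext t
  simp only
  rw [integral_mul_const]
  congr 1
  exact (integral_ofReal (𝕜 := ℂ)).symm


lemma polarAux (H : ℝ × ℝ → ℂ) (hH : Integrable H) :
    (∫ θ in Set.Ico 0 π, ∫ S : ℝ, |S| • H (S * Real.cos θ, S * Real.sin θ)) = ∫ p, H p := by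
  set T : ℝ × ℝ → ℝ × ℝ := fun q => (q.2 * Real.cos q.1, q.2 * Real.sin q.1) with hT
  set s : Set (ℝ × ℝ) := Set.Ico 0 π ×ˢ ({0}ᶜ : Set ℝ) with hs_def
  have hs : MeasurableSet s := measurableSet_Ico.prod (measurableSet_singleton 0).compl
  set B : ℝ × ℝ → ℝ × ℝ →L[ℝ] ℝ × ℝ := fun q =>
    LinearMap.toContinuousLinearMap (Matrix.toLin (Module.Basis.finTwoProd ℝ) (Module.Basis.finTwoProd ℝ)
      !![-q.2 * Real.sin q.1, Real.cos q.1; q.2 * Real.cos q.1, Real.sin q.1]) with hB_def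
  have hB : ∀ q : ℝ × ℝ, HasFDerivAt T (B q) q := by
    intro q
    show HasFDerivAt T
      (LinearMap.toContinuousLinearMap (Matrix.toLin (Module.Basis.finTwoProd ℝ) (Module.Basis.finTwoProd ℝ)
        !![-q.2 * Real.sin q.1, Real.cos q.1; q.2 * Real.cos q.1, Real.sin q.1])) q
    rw [Matrix.toLin_finTwoProd_toContinuousLinearMap]
    convert! HasFDerivAt.prodMk (𝕜 := ℝ)
      (hasFDerivAt_snd.mul ((hasDerivAt_cos q.1).comp_hasFDerivAt q hasFDerivAt_fst))
      (hasFDerivAt_snd.mul ((hasDerivAt_sin q.1).comp_hasFDerivAt q hasFDerivAt_fst)) using 2 <;>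
    simp [smul_smul, add_comm, neg_mul, smul_neg, neg_smul _ (ContinuousLinearMap.fst ℝ ℝ ℝ)]
  have hdet : ∀ q : ℝ × ℝ, (B q).det = -q.2 := by
    intro q
    have h1 := Real.sin_sq_add_cos_sq q.1
    simp only [hB_def, LinearMap.det_toContinuousLinearMap, LinearMap.det_toLin,
      Matrix.det_fin_two_of]
    linear_combination (-q.2) * h1
  have hinj : Set.InjOn T s := by
    rintro ⟨θ₁, S₁⟩ ⟨h1θ, (h1S : S₁ ≠ 0)⟩ ⟨θ₂, S₂⟩ ⟨h2θ, (h2S : S₂ ≠ 0)⟩ heq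
    simp only [hT, Prod.mk.injEq] at heq
    obtain ⟨e1, e2⟩ := heq
    simp only [Set.mem_Ico] at h1θ h2θ
    have c1 := Real.sin_sq_add_cos_sq θ₁
    have c2 := Real.sin_sq_add_cos_sq θ₂
    have a1 : (S₁ * Real.cos θ₁) ^ 2 = (S₂ * Real.cos θ₂) ^ 2 := by rw [e1]
    have a2 : (S₁ * Real.sin θ₁) ^ 2 = (S₂ * Real.sin θ₂) ^ 2 := by rw [e2]
    have hsq : S₁ ^ 2 = S₂ ^ 2 := by linear_combination a1 + a2 - S₁ ^ 2 * c1 + S₂ ^ 2 * c2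
    rcases sq_eq_sq_iff_eq_or_eq_neg.mp hsq with h | h
    · subst h
      have hc : Real.cos θ₁ = Real.cos θ₂ := mul_left_cancel₀ h1S e1
      have : θ₁ = θ₂ := Real.injOn_cos ⟨h1θ.1, h1θ.2.le⟩ ⟨h2θ.1, h2θ.2.le⟩ hc
      simp [this]
    · exfalso
      rw [h] at e1 e2
      have hs2 : -Real.sin θ₁ = Real.sin θ₂ :=
        mul_left_cancel₀ h2S (by linarith)
      have h1pos : 0 ≤ Real.sin θ₁ := Real.sin_nonneg_of_mem_Icc ⟨h1θ.1, h1θ.2.le⟩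
      have h2pos : 0 ≤ Real.sin θ₂ := Real.sin_nonneg_of_mem_Icc ⟨h2θ.1, h2θ.2.le⟩
      have hz1 : Real.sin θ₁ = 0 := by linarith
      have hz2 : Real.sin θ₂ = 0 := by linarith
      have ht1 : θ₁ = 0 := (Real.sin_eq_zero_iff_of_lt_of_lt
        (by linarith [h1θ.1, Real.pi_pos]) h1θ.2).mp hz1
      have ht2 : θ₂ = 0 := (Real.sin_eq_zero_iff_of_lt_of_lt
        (by linarith [h2θ.1, Real.pi_pos]) h2θ.2).mp hz2
      rw [ht1, ht2, Real.cos_zero, mul_one, mul_one] at e1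
      exact h2S (by linarith)
  -- image covers everything except possibly 0
  have himg : ∀ p : ℝ × ℝ, p ≠ 0 → p ∈ T '' s := by
    rintro ⟨a, b⟩ hp
    set z : ℂ := Complex.mk a b with hz
    have hz0 : z ≠ 0 := by
      intro h
      apply hp
      have h1 : z.re = 0 := by rw [h]; simp
      have h2 : z.im = 0 := by rw [h]; simp
      simp only [hz] at h1 h2
      exact Prod.ext h1 h2
    set r : ℝ := ‖z‖ with hr
    have hrpos : 0 < r := norm_pos_iff.mpr hz0
    set φ : ℝ := Complex.arg z with hφ
    have hre : a = r * Real.cos φ := (Complex.cos_arg hz0).symm ▸ by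
      field_simp [hr]
      rw [hr]; exact mul_comm _ _
    have him : b = r * Real.sin φ := by
      have := Complex.sin_arg z
      rw [hφ, this]
      field_simp [hr]
      rw [hr]; exact mul_comm _ _
    have hφ1 : -π < φ := Complex.neg_pi_lt_arg z
    have hφ2 : φ ≤ π := Complex.arg_le_pi z
    rcases lt_or_ge φ 0 with hneg | hpos
    · refine ⟨(φ + π, -r), ⟨?_, ?_⟩, ?_⟩
      · show φ + π ∈ Set.Ico 0 π
        rw [Set.mem_Ico]; constructor <;> linarith
      · show -r ∈ ({0}ᶜ : Set ℝ)
        simp only [Set.mem_compl_iff, Set.mem_singleton_iff]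
        intro h; nlinarith
      · show (-r * Real.cos (φ + π), -r * Real.sin (φ + π)) = (a, b)
        rw [Real.cos_add_pi, Real.sin_add_pi]
        exact Prod.ext (by simp; linarith [hre]) (by simp; linarith [him])
    · rcases lt_or_eq_of_le hφ2 with hlt | heqpi
      · refine ⟨(φ, r), ⟨?_, ?_⟩, ?_⟩
        · show φ ∈ Set.Ico 0 π
          rw [Set.mem_Ico]; exact ⟨hpos, hlt⟩
        · show r ∈ ({0}ᶜ : Set ℝ)
          simp only [Set.mem_compl_iff, Set.mem_singleton_iff]
          positivity
        · show (r * Real.cos φ, r * Real.sin φ) = (a, b)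
          exact Prod.ext (by simp [hre]) (by simp [him])
      · refine ⟨(0, -r), ⟨?_, ?_⟩, ?_⟩
        · show (0:ℝ) ∈ Set.Ico 0 π
          rw [Set.mem_Ico]; exact ⟨le_refl 0, Real.pi_pos⟩
        · show -r ∈ ({0}ᶜ : Set ℝ)
          simp only [Set.mem_compl_iff, Set.mem_singleton_iff]
          intro h; nlinarith
        · show (-r * Real.cos 0, -r * Real.sin 0) = (a, b)
          rw [Real.cos_zero, Real.sin_zero]
          refine Prod.ext ?_ ?_
          · simp only
            rw [hre, heqpi, Real.cos_pi]; ring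
          · simp only
            rw [him, heqpi, Real.sin_pi]; ring
  have hae : T '' s =ᵐ[volume] Set.univ := by
    rw [ae_eq_univ]
    have h0 : volume ({(0 : ℝ × ℝ)} : Set (ℝ × ℝ)) = 0 := by
      rw [Measure.volume_eq_prod, show ({(0 : ℝ × ℝ)} : Set (ℝ × ℝ)) = {(0:ℝ)} ×ˢ {(0:ℝ)} from
        (Set.singleton_prod_singleton).symm, Measure.prod_prod, Real.volume_singleton, mul_zero]
    refine measure_mono_null ?_ h0
    intro p hp
    simp only [Set.mem_compl_iff] at hp
    simp only [Set.mem_singleton_iff]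
    by_contra h
    exact hp (himg p h)
  have hfds : ∀ q ∈ s, HasFDerivWithinAt T (B q) s q := fun q _ => (hB q).hasFDerivWithinAt
  have hIO : IntegrableOn (fun q => |(B q).det| • H (T q)) s volume :=
    (integrableOn_image_iff_integrableOn_abs_det_fderiv_smul volume hs hfds hinj H).mp
      hH.integrableOn
  have hIO2 : IntegrableOn (fun q : ℝ × ℝ => |q.2| • H (T q)) s volume := by
    refine hIO.congr_fun (fun q _ => ?_) hs
    dsimp only
    rw [hdet, abs_neg]
  have hcompl : ({0}ᶜ : Set ℝ) =ᵐ[volume] Set.univ := by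
    rw [ae_eq_univ, compl_compl]
    exact Real.volume_singleton
  calc (∫ θ in Set.Ico 0 π, ∫ S : ℝ, |S| • H (S * Real.cos θ, S * Real.sin θ))
      = ∫ θ in Set.Ico 0 π, ∫ S in ({0}ᶜ : Set ℝ), |S| • H (S * Real.cos θ, S * Real.sin θ) := by
        refine integral_congr_ae (Filter.Eventually.of_forall fun θ => ?_)
        simp only
        rw [← setIntegral_univ]
        exact (setIntegral_congr_set hcompl).symm
    _ = ∫ q in s, |q.2| • H (T q) := by
        rw [hs_def] at hIO2 ⊢
        rw [Measure.volume_eq_prod] at hIO2 ⊢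
        exact (setIntegral_prod _ hIO2).symm
    _ = ∫ q in s, |(B q).det| • H (T q) := by
        refine setIntegral_congr_fun hs fun q _ => ?_
        rw [hdet, abs_neg]
    _ = ∫ p in T '' s, H p :=
        (integral_image_eq_integral_abs_det_fderiv_smul volume hs hfds hinj H).symm
    _ = ∫ p, H p := by
        rw [setIntegral_congr_set hae, setIntegral_univ]


lemma measurableEquivRealProd_symm_apply' (q : ℝ × ℝ) :
    Complex.measurableEquivRealProd.symm q = (q.1 + q.2 * Complex.I) := by
  apply Complex.ext <;> simp [Complex.measurableEquivRealProd, Complex.equivRealProd]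

lemma inversionAux (f : ℝ × ℝ → ℝ) (hf : Integrable f) (hc : Continuous f)
    (hFf : Integrable (fun w : ℝ × ℝ =>
      ∫ p : ℝ × ℝ, (f p : ℂ) * Complex.exp (-Complex.I * (p.1 * w.1 + p.2 * w.2)))) (x y : ℝ) :
    (f (x, y) : ℂ) = ((1 / (4 * Real.pi ^ 2) : ℝ) : ℂ) *
      ∫ w : ℝ × ℝ, Complex.exp (Complex.I * (x * w.1 + y * w.2)) *
        (∫ p : ℝ × ℝ, (f p : ℂ) * Complex.exp (-Complex.I * (p.1 * w.1 + p.2 * w.2))) := by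
  set G : ℝ × ℝ → ℂ := fun w =>
    ∫ p : ℝ × ℝ, (f p : ℂ) * Complex.exp (-Complex.I * (p.1 * w.1 + p.2 * w.2)) with hG
  set g : ℂ → ℂ := fun z => (f (z.re, z.im) : ℂ) with hg
  have hgcomp : g = (fun p : ℝ × ℝ => (f p : ℂ)) ∘ Complex.measurableEquivRealProd := rfl
  have hg_int : Integrable g := by
    rw [hgcomp]
    exact (Complex.volume_preserving_equiv_real_prod.integrable_comp_emb
      Complex.measurableEquivRealProd.measurableEmbedding).mpr hf.ofReal
  have hg_cont : Continuous g :=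
    Complex.continuous_ofReal.comp (hc.comp (Complex.continuous_re.prodMk Complex.continuous_im))
  have h2π : (2 * π) ≠ 0 := by positivity
  have key : ∀ w : ℂ, 𝓕 g ((2 * π)⁻¹ • w) = G (w.re, w.im) := by
    intro w
    rw [Real.fourier_eq']
    rw [← (Complex.volume_preserving_equiv_real_prod.symm).integral_comp
      Complex.measurableEquivRealProd.symm.measurableEmbedding]
    rw [hG]
    congr 1
    funext q
    rw [measurableEquivRealProd_symm_apply' q]
    have hinner : inner (𝕜 := ℝ) ((q.1 : ℂ) + q.2 * Complex.I) ((2 * π)⁻¹ • w)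
        = (2 * π)⁻¹ * (q.1 * w.re + q.2 * w.im) := by
      rw [real_inner_smul_right]
      congr 1
      simp [RCLike.inner_apply, Complex.mul_re]
      ring
    rw [hinner]
    have hgval : g ((q.1 : ℂ) + q.2 * Complex.I) = (f q : ℂ) := by
      rw [hg]
      simp
    rw [hgval, smul_eq_mul, mul_comm]
    congr 1
    have harg : (↑(-2 * π * ((2 * π)⁻¹ * (q.1 * w.re + q.2 * w.im))) : ℂ) * Complex.I
        = -Complex.I * (q.1 * w.re + q.2 * w.im) := by
      have : -2 * π * ((2 * π)⁻¹ * (q.1 * w.re + q.2 * w.im))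
          = -(q.1 * w.re + q.2 * w.im) := by
        field_simp
      rw [this]
      push_cast
      ring
    rw [harg]
  have hF_int : Integrable (𝓕 g) := by
    have h2 : Integrable (fun q : ℝ × ℝ => G ((2 * π) • q)) :=
      (integrable_comp_smul_iff volume G h2π).mpr hFf
    have h3 : Integrable ((fun q : ℝ × ℝ => G ((2 * π) • q)) ∘ Complex.measurableEquivRealProd) :=
      (Complex.volume_preserving_equiv_real_prod.integrable_comp_emb
        Complex.measurableEquivRealProd.measurableEmbedding).mpr h2
    refine h3.congr (Filter.Eventually.of_forall fun ξ => ?_)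
    have := key ((2 * π) • ξ)
    rw [smul_smul, inv_mul_cancel₀ h2π, one_smul] at this
    rw [Function.comp_apply, this]
    show G ((2 * π) • (ξ.re, ξ.im)) = G (((2 * π) • ξ).re, ((2 * π) • ξ).im)
    congr 1
    simp [Prod.smul_mk, smul_eq_mul, Complex.real_smul, Complex.mul_re, Complex.mul_im]
  set v : ℂ := ⟨x, y⟩ with hv
  have hinv : 𝓕⁻ (𝓕 g) v = g v := hg_int.fourierInv_fourier_eq hF_int hg_cont.continuousAt
  have hILHS : 𝓕⁻ (𝓕 g) v
      = ((4 * π ^ 2 : ℝ))⁻¹ • ∫ w : ℝ × ℝ,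
          Complex.exp (Complex.I * (x * w.1 + y * w.2)) * G w := by
    rw [Real.fourierInv_eq']
    have hsc := MeasureTheory.Measure.integral_comp_smul (μ := volume)
      (f := fun ξ : ℂ => Complex.exp ((↑(2 * π * inner (𝕜 := ℝ) ξ v) : ℂ) * Complex.I) • 𝓕 g ξ)
      ((2 * π)⁻¹)
    rw [Complex.finrank_real_complex] at hsc
    have habs : |((((2 * π)⁻¹ : ℝ)) ^ 2)⁻¹| = 4 * π ^ 2 := by
      rw [abs_of_nonneg (by positivity)]
      field_simp
      ring
    rw [habs] at hsc
    have h4π : (4 * π ^ 2 : ℝ) ≠ 0 := by positivity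
    have hmain : (∫ ξ : ℂ, Complex.exp ((↑(2 * π * inner (𝕜 := ℝ) ξ v) : ℂ) * Complex.I) • 𝓕 g ξ)
        = (4 * π ^ 2 : ℝ)⁻¹ • ∫ ξ : ℂ,
            Complex.exp ((↑(2 * π * inner (𝕜 := ℝ) ((2 * π)⁻¹ • ξ) v) : ℂ) * Complex.I) •
              𝓕 g ((2 * π)⁻¹ • ξ) := by
      rw [hsc, smul_smul, inv_mul_cancel₀ h4π, one_smul]
    rw [hmain]
    congr 1
    rw [← (Complex.volume_preserving_equiv_real_prod.symm).integral_comp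
      Complex.measurableEquivRealProd.symm.measurableEmbedding]
    congr 1
    funext q
    rw [measurableEquivRealProd_symm_apply' q]
    rw [key ((q.1 : ℂ) + q.2 * Complex.I)]
    have hre : ((q.1 : ℂ) + q.2 * Complex.I).re = q.1 := by simp
    have him : ((q.1 : ℂ) + q.2 * Complex.I).im = q.2 := by simp
    rw [hre, him]
    have hinner : inner (𝕜 := ℝ) ((2 * π)⁻¹ • ((q.1 : ℂ) + q.2 * Complex.I)) v
        = (2 * π)⁻¹ * (q.1 * x + q.2 * y) := by
      rw [real_inner_smul_left]
      congr 1
      simp [RCLike.inner_apply, Complex.mul_re, hv]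
      ring
    rw [hinner, smul_eq_mul]
    congr 1
    have : 2 * π * ((2 * π)⁻¹ * (q.1 * x + q.2 * y)) = x * q.1 + y * q.2 := by
      field_simp
    rw [this]
    push_cast
    ring
  have hgv : g v = (f (x, y) : ℂ) := rfl
  rw [← hgv, ← hinv, hILHS, Complex.real_smul]
  congr 1
  norm_num


/-- Filtered back projection formula: for `f ∈ L¹(ℝ²)` continuous with `Ff ∈ L¹(ℝ²)`,
`f(x,y) = (1/(4π²)) ∫₀^π ∫ℝ F(Rf)(S,θ)·|S|·e^{iS(x·cos θ + y·sin θ)} dS dθ`. -/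
theorem statement13 (f : ℝ × ℝ → ℝ) (hf : Integrable f) (hc : Continuous f)
    (hFf : Integrable (fun w : ℝ × ℝ =>
      ∫ p : ℝ × ℝ, (f p : ℂ) * Complex.exp (-Complex.I * (p.1 * w.1 + p.2 * w.2)))) :
    ∀ x y : ℝ,
      (f (x, y) : ℂ) = ((1 / (4 * Real.pi ^ 2) : ℝ) : ℂ) *
        ∫ θ in Set.Ico 0 Real.pi, ∫ S : ℝ,
          (∫ t : ℝ,
              (↑(∫ s : ℝ, f (t * Real.cos θ - s * Real.sin θ, t * Real.sin θ + s * Real.cos θ)) : ℂ) *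
                Complex.exp (-Complex.I * (S * t))) *
            (|S| : ℝ) * Complex.exp (Complex.I * (S * (x * Real.cos θ + y * Real.sin θ))) := by
  intro x y
  set G : ℝ × ℝ → ℂ := fun w =>
    ∫ p : ℝ × ℝ, (f p : ℂ) * Complex.exp (-Complex.I * (p.1 * w.1 + p.2 * w.2)) with hG
  have hH : Integrable (fun w : ℝ × ℝ =>
      Complex.exp (Complex.I * (x * w.1 + y * w.2)) * G w) := by
    refine hFf.bdd_mul (c := 1) (f := fun w : ℝ × ℝ => Complex.exp (Complex.I * (x * w.1 + y * w.2)))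
      (Continuous.aestronglyMeasurable (by fun_prop)) (Filter.Eventually.of_forall fun w => le_of_eq ?_)
    rw [Complex.norm_exp]
    norm_num [Complex.mul_re]
  have step1 : (∫ θ in Set.Ico 0 Real.pi, ∫ S : ℝ,
        (∫ t : ℝ,
            (↑(∫ s : ℝ, f (t * Real.cos θ - s * Real.sin θ, t * Real.sin θ + s * Real.cos θ)) : ℂ) *
              Complex.exp (-Complex.I * (S * t))) *
          (|S| : ℝ) * Complex.exp (Complex.I * (S * (x * Real.cos θ + y * Real.sin θ))))
      = ∫ θ in Set.Ico 0 Real.pi, ∫ S : ℝ,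
          |S| • (Complex.exp (Complex.I * (x * (S * Real.cos θ : ℝ) + y * (S * Real.sin θ : ℝ))) *
            G (S * Real.cos θ, S * Real.sin θ)) := by
    refine integral_congr_ae (Filter.Eventually.of_forall fun θ => ?_)
    simp only
    refine integral_congr_ae (Filter.Eventually.of_forall fun S => ?_)
    simp only
    rw [fourierSlice f hf θ S]
    have hexp : Complex.exp (Complex.I * (S * (x * Real.cos θ + y * Real.sin θ)))
        = Complex.exp (Complex.I * (x * (S * Real.cos θ : ℝ) + y * (S * Real.sin θ : ℝ))) := by
      congr 1
      push_cast
      ring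
    rw [hexp, Complex.real_smul]
    ring
  have step2 := polarAux (fun w : ℝ × ℝ =>
    Complex.exp (Complex.I * (x * w.1 + y * w.2)) * G w) hH
  simp only at step2
  rw [step1, step2]
  exact inversionAux f hf hc hFf x y
end

section
/- Shannon sampling theorem: if h ∈ L²(ℝ) has Fourier transform supported in [−L, L] for some L > 0, then h is uniquely determined by its samples h(πk/L), k ∈ ℤ, and h(t) = Σ_{k∈ℤ} h(πk/L) · sinc(Lt − kπ) for all t ∈ ℝ. -/
open MeasureTheory Real Filter

/-- The unnormalized cardinal sine function `sinc(t) = sin(t)/t`, with `sinc 0 = 1`. -/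
noncomputable def sinc (t : ℝ) : ℝ := if t = 0 then 1 else Real.sin t / t

open MeasureTheory Set Complex
open scoped ComplexConjugate

lemma sinc_neg (x : ℝ) : _root_.sinc (-x) = _root_.sinc x := by
  unfold _root_.sinc
  rcases eq_or_ne x 0 with rfl | hx
  · simp
  · rw [if_neg (by simpa using hx), if_neg hx, Real.sin_neg]
    field_simp

lemma integral_exp_Ioc {L : ℝ} (hL : 0 < L) (θ : ℝ) :
    ∫ x in Set.Ioc (-L) L, Complex.exp (Complex.I * (x * θ)) =
      ((2 * L * _root_.sinc (L * θ) : ℝ) : ℂ) := by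
  rw [← intervalIntegral.integral_of_le (by linarith : -L ≤ L)]
  rcases eq_or_ne θ 0 with rfl | hθ
  · simp [_root_.sinc]
    norm_num
    ring
  · have hc : (Complex.I * θ) ≠ 0 := by
      simp [Complex.ext_iff, hθ]
    have : ∀ x : ℝ, Complex.I * (x * θ) = (Complex.I * θ) * x := by intro x; ring
    simp_rw [this]
    rw [integral_exp_mul_complex hc]
    have e1 : (Complex.I * θ) * (L : ℂ) = ((θ * L : ℝ) : ℂ) * Complex.I := by push_cast; ring
    have e2 : (Complex.I * θ) * ((-L : ℝ) : ℂ) = ((-(θ * L) : ℝ) : ℂ) * Complex.I := by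
      push_cast; ring
    rw [e1, e2, Complex.exp_mul_I, Complex.exp_mul_I]
    rw [← Complex.ofReal_cos, ← Complex.ofReal_sin, ← Complex.ofReal_cos, ← Complex.ofReal_sin]
    rw [Real.cos_neg, Real.sin_neg]
    have hLθ : L * θ ≠ 0 := mul_ne_zero hL.ne' hθ
    rw [_root_.sinc, if_neg hLθ]
    have : Real.sin (θ * L) = Real.sin (L * θ) := by rw [mul_comm]
    rw [this]
    have hLC : (L : ℂ) ≠ 0 := Complex.ofReal_ne_zero.mpr hL.ne'
    have hθC : (θ : ℂ) ≠ 0 := Complex.ofReal_ne_zero.mpr hθ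
    field_simp
    simp only [Complex.ofReal_mul, Complex.ofReal_div, Complex.ofReal_inv, Complex.ofReal_ofNat, Complex.ofReal_neg]
    linear_combination (-2 * Complex.I * (Real.sin (θ * L) : ℂ)) * mul_inv_cancel₀ hθC

lemma measurable_liftIoc {T : ℝ} [hT : Fact (0 < T)] (a : ℝ) (f : ℝ → ℂ)
    (hf : Measurable f) : Measurable (AddCircle.liftIoc T a f) := by
  have : AddCircle.liftIoc T a f =
      (fun x : Set.Ioc a (a + T) => f x) ∘ (AddCircle.measurableEquivIoc T a) := rfl
  rw [this]
  exact (hf.comp measurable_subtype_coe).comp (AddCircle.measurableEquivIoc T a).measurable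

lemma memℒp_liftIoc {T : ℝ} [hT : Fact (0 < T)] (a : ℝ) (f : ℝ → ℂ)
    (hm : Measurable f) (hf : MemLp f 2 (volume.restrict (Set.Ioc a (a + T)))) :
    MemLp (AddCircle.liftIoc T a f) 2 (AddCircle.haarAddCircle : Measure (AddCircle T)) := by
  have hmeas : Measurable (AddCircle.liftIoc T a f) := measurable_liftIoc a f hm
  have h1 : MemLp (AddCircle.liftIoc T a f) 2 (volume : Measure (AddCircle T)) := by
    rw [← (AddCircle.measurePreserving_mk T a).map_eq]
    rw [memLp_map_measure_iff hmeas.aestronglyMeasurable AddCircle.measurable_mk'.aemeasurable]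
    refine hf.ae_eq ?_
    filter_upwards [ae_restrict_mem measurableSet_Ioc] with x hx
    exact (AddCircle.liftIoc_coe_apply hx).symm
  have h2 : (AddCircle.haarAddCircle : Measure (AddCircle T)) =
      (ENNReal.ofReal T)⁻¹ • (volume : Measure (AddCircle T)) := by
    rw [AddCircle.volume_eq_smul_haarAddCircle, ← smul_assoc, smul_eq_mul,
      ENNReal.inv_mul_cancel (by simpa using hT.out) ENNReal.ofReal_ne_top, one_smul]
  rw [h2]
  exact h1.smul_measure (by simp [ENNReal.inv_ne_top, ENNReal.ofReal_pos, hT.out])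

open scoped InnerProductSpace in
theorem shannon_hasSum (L : ℝ) (hL : 0 < L) (h : ℝ → ℂ) (φ : ℝ → ℂ)
    (hφm : Measurable φ) (hφ2 : MemLp φ 2)
    (hφsupp : Function.support φ ⊆ Set.Icc (-L) L)
    (hrep : ∀ t : ℝ, h t =
      ((1 / (2 * Real.pi) : ℝ) : ℂ) * ∫ ω : ℝ, φ ω * Complex.exp (Complex.I * (ω * t)))
    (t : ℝ) :
    HasSum (fun k : ℤ => h (Real.pi * k / L) * ((_root_.sinc (L * t - k * Real.pi) : ℝ) : ℂ)) (h t) := by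
  haveI hT : Fact (0 < 2 * L) := ⟨by linarith⟩
  have hb : (-L) < (-L) + 2 * L := by linarith
  -- integral over ℝ equals integral over Ioc
  have hInt : ∀ s : ℝ, ∫ ω in Set.Ioc (-L) L, φ ω * Complex.exp (Complex.I * (ω * s)) =
      ∫ ω : ℝ, φ ω * Complex.exp (Complex.I * (ω * s)) := by
    intro s
    rw [← MeasureTheory.integral_Icc_eq_integral_Ioc]
    refine setIntegral_eq_integral_of_forall_compl_eq_zero fun x hx => ?_
    have : φ x = 0 := Function.notMem_support.mp fun hs => hx (hφsupp hs)
    simp [this]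
  have hval : ∀ s : ℝ, ∫ ω in Set.Ioc (-L) L, φ ω * Complex.exp (Complex.I * (ω * s)) =
      ((2 * π : ℝ) : ℂ) * h s := by
    intro s
    rw [hInt s, hrep s, ← mul_assoc, ← Complex.ofReal_mul]
    rw [show (2 * π) * (1 / (2 * π)) = 1 by field_simp]
    simp
  -- Fourier coefficients on [-L, L]
  have key : ∀ (g : ℝ → ℂ) (n : ℤ), fourierCoeffOn hb g n
      = ((1 / (2 * L) : ℝ) : ℂ) * ∫ x in Set.Ioc (-L) L,
          g x * Complex.exp (Complex.I * (x * ((-(π * n / L) : ℝ) : ℂ))) := by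
    intro g n
    rw [fourierCoeffOn_eq_integral, intervalIntegral.integral_of_le (by linarith)]
    simp_rw [fourier_coe_apply, smul_eq_mul]
    rw [Complex.real_smul]
    simp only [show (-L) + 2 * L = L from by ring]
    congr 1
    · exact congrArg Complex.ofReal (by ring)
    · refine setIntegral_congr_fun measurableSet_Ioc fun x hx => ?_
      rw [mul_comm]
      congr 1
      have hLC : (L : ℂ) ≠ 0 := Complex.ofReal_ne_zero.mpr hL.ne'
      congr 1
      push_cast
      have : ((L : ℂ) - -(L : ℂ)) = 2 * L := by ring
      rw [this]
      field_simp
  -- coefficient of φ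
  have cφ : ∀ n : ℤ, fourierCoeffOn hb φ n = ((π / L : ℝ) : ℂ) * h (-(π * n / L)) := by
    intro n
    rw [key φ n, hval (-(π * n / L)), ← mul_assoc, ← Complex.ofReal_mul]
    congr 2
    field_simp
  -- coefficient of the exponential
  have cG : ∀ n : ℤ, fourierCoeffOn hb (fun ω : ℝ => Complex.exp (Complex.I * (ω * (-t)))) n
      = ((_root_.sinc (L * t + n * π) : ℝ) : ℂ) := by
    intro n
    rw [key _ n]
    have : ∫ x in Set.Ioc (-L) L,
        Complex.exp (Complex.I * (x * (-t))) *
          Complex.exp (Complex.I * (x * ((-(π * n / L) : ℝ) : ℂ)))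
        = ∫ x in Set.Ioc (-L) L,
            Complex.exp (Complex.I * (x * ((-(t + π * n / L) : ℝ) : ℂ))) := by
      refine setIntegral_congr_fun measurableSet_Ioc fun x hx => ?_
      rw [← Complex.exp_add]
      congr 1
      push_cast
      ring
    rw [this, integral_exp_Ioc hL (-(t + π * n / L))]
    rw [show L * (-(t + π * n / L)) = -(L * t + n * π) from by field_simp, _root_.sinc_neg]
    rw [← Complex.ofReal_mul]
    congr 1
    field_simp
  -- exponential function data
  set G : ℝ → ℂ := fun ω : ℝ => Complex.exp (Complex.I * (ω * (-t))) with hGdef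
  have hGmeas : Measurable G := by
    have : Continuous G := by fun_prop
    exact this.measurable
  have hGmem : MemLp G 2 (volume.restrict (Set.Ioc (-L) (-L + 2 * L))) := by
    haveI : IsFiniteMeasure (volume.restrict (Set.Ioc (-L) (-L + 2 * L))) :=
      ⟨by rw [Measure.restrict_apply_univ]; exact measure_Ioc_lt_top⟩
    refine MemLp.of_bound ((hGmeas.aestronglyMeasurable)) 1 (ae_of_all _ fun x => ?_)
    rw [hGdef]
    simp only [Complex.norm_exp]
    have : (Complex.I * (x * (-t : ℝ))).re = 0 := by simp
    norm_num [this]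
  -- Lp elements
  have hFm2 : MemLp (AddCircle.liftIoc (2 * L) (-L) φ) 2
      (AddCircle.haarAddCircle : Measure (AddCircle (2 * L))) :=
    memℒp_liftIoc (-L) φ hφm (hφ2.restrict _)
  have hGm2 : MemLp (AddCircle.liftIoc (2 * L) (-L) G) 2
      (AddCircle.haarAddCircle : Measure (AddCircle (2 * L))) :=
    memℒp_liftIoc (-L) G hGmeas hGmem
  set Flp : Lp ℂ 2 (AddCircle.haarAddCircle : Measure (AddCircle (2 * L))) :=
    hFm2.toLp _ with hFlp
  set Glp : Lp ℂ 2 (AddCircle.haarAddCircle : Measure (AddCircle (2 * L))) :=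
    hGm2.toLp _ with hGlp
  -- coefficients only depend on a.e. class
  have coeff_congr : ∀ (f g : AddCircle (2 * L) → ℂ),
      f =ᵐ[(AddCircle.haarAddCircle : Measure (AddCircle (2 * L)))] g →
      ∀ n, fourierCoeff f n = fourierCoeff g n := by
    intro f g hfg n
    unfold fourierCoeff
    refine integral_congr_ae ?_
    filter_upwards [hfg] with x hx
    rw [hx]
  have coeffF : ∀ n : ℤ, fourierCoeff (Flp : AddCircle (2 * L) → ℂ) n
      = ((π / L : ℝ) : ℂ) * h (-(π * n / L)) := by
    intro n
    rw [coeff_congr _ _ (hFm2.coeFn_toLp) n, fourierCoeff_liftIoc_eq]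
    exact cφ n
  have coeffG : ∀ n : ℤ, fourierCoeff (Glp : AddCircle (2 * L) → ℂ) n
      = ((_root_.sinc (L * t + n * π) : ℝ) : ℂ) := by
    intro n
    rw [coeff_congr _ _ (hGm2.coeFn_toLp) n, fourierCoeff_liftIoc_eq]
    exact cG n
  -- the inner product of Glp and Flp
  have hinner : (inner ℂ Glp Flp : ℂ) = ((π / L : ℝ) : ℂ) * h t := by
    rw [MeasureTheory.L2.inner_def]
    have step1 : ∫ a, (inner ℂ (Glp a) (Flp a) : ℂ) ∂(AddCircle.haarAddCircle) =
        ∫ a, AddCircle.liftIoc (2 * L) (-L)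
          (fun ω => conj (G ω) * φ ω) a ∂(AddCircle.haarAddCircle) := by
      refine integral_congr_ae ?_
      filter_upwards [hFm2.coeFn_toLp, hGm2.coeFn_toLp] with x hF hG
      rw [RCLike.inner_apply, hF, hG, mul_comm]
      rfl
    rw [step1]
    have step2 : ∫ a, AddCircle.liftIoc (2 * L) (-L)
        (fun ω => conj (G ω) * φ ω) a ∂(AddCircle.haarAddCircle)
        = fourierCoeff (AddCircle.liftIoc (2 * L) (-L) (fun ω => conj (G ω) * φ ω)) 0 := by
      unfold fourierCoeff
      refine (integral_congr_ae (ae_of_all _ fun x => ?_)).symm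
      simp
    rw [step2, fourierCoeff_liftIoc_eq, key _ 0]
    have step3 : ∫ x in Set.Ioc (-L) L,
        (fun ω => conj (G ω) * φ ω) x *
          Complex.exp (Complex.I * (x * ((-(π * (0:ℤ) / L) : ℝ) : ℂ)))
        = ∫ ω in Set.Ioc (-L) L, φ ω * Complex.exp (Complex.I * (ω * t)) := by
      refine setIntegral_congr_fun measurableSet_Ioc fun x hx => ?_
      rw [hGdef]
      have hconj : conj (Complex.exp (Complex.I * (x * -(t : ℂ)))) =
          Complex.exp (Complex.I * (x * t)) := by
        rw [← Complex.exp_conj]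
        congr 1
        simp [map_mul, Complex.conj_I, Complex.conj_ofReal]
      simp only []
      rw [hconj]
      have h0 : ((-(π * ((0:ℤ):ℝ) / L)) : ℝ) = 0 := by norm_num
      rw [h0]
      simp [mul_comm]
    rw [step3, hval t, ← mul_assoc, ← Complex.ofReal_mul]
    congr 2
    field_simp
  -- Parseval
  have par := HilbertBasis.hasSum_inner_mul_inner
    (fourierBasis (T := 2 * L)) Glp Flp
  rw [hinner] at par
  have hterm : (fun i : ℤ => (inner ℂ Glp ((fourierBasis (T := 2 * L)) i) : ℂ)
        * (inner ℂ ((fourierBasis (T := 2 * L)) i) Flp : ℂ))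
      = fun i : ℤ => ((_root_.sinc (L * t + i * π) : ℝ) : ℂ)
        * (((π / L : ℝ) : ℂ) * h (-(π * i / L))) := by
    funext i
    rw [← inner_conj_symm, ← fourierBasis.repr_apply_apply, fourierBasis_repr,
      ← fourierBasis.repr_apply_apply, fourierBasis_repr, coeffF, coeffG, Complex.conj_ofReal]
  rw [hterm] at par
  -- reindex k ↦ -k and cancel the constant π / L
  have hne : ((π / L : ℝ) : ℂ) ≠ 0 := by
    simp [Complex.ofReal_ne_zero, div_ne_zero, Real.pi_ne_zero, hL.ne']
  rw [← hasSum_mul_left_iff hne]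
  have hcomp : ((fun k : ℤ => ((π / L : ℝ) : ℂ) *
        (h (Real.pi * k / L) * ((_root_.sinc (L * t - k * Real.pi) : ℝ) : ℂ))) ∘ (Equiv.neg ℤ))
      = fun i : ℤ => ((_root_.sinc (L * t + i * π) : ℝ) : ℂ)
        * (((π / L : ℝ) : ℂ) * h (-(π * i / L))) := by
    funext i
    simp only [Function.comp_apply, Equiv.neg_apply]
    have h1 : (Real.pi * ((-i : ℤ) : ℝ) / L) = -(π * i / L) := by push_cast; ring
    have h2 : (L * t - ((-i : ℤ) : ℝ) * Real.pi) = L * t + i * π := by push_cast; ring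
    rw [h1, h2]
    ring
  exact (Equiv.hasSum_iff (Equiv.neg ℤ)).mp (hcomp ▸ par)


/-- Version of the sampling formula without measurability assumption. -/
theorem shannon_hasSum' (L : ℝ) (hL : 0 < L) (h : ℝ → ℂ) (φ : ℝ → ℂ)
    (hφ2 : MemLp φ 2) (hφsupp : Function.support φ ⊆ Set.Icc (-L) L)
    (hrep : ∀ t : ℝ, h t =
      ((1 / (2 * Real.pi) : ℝ) : ℂ) * ∫ ω : ℝ, φ ω * Complex.exp (Complex.I * (ω * t)))
    (t : ℝ) :
    HasSum (fun k : ℤ => h (Real.pi * k / L) * ((_root_.sinc (L * t - k * Real.pi) : ℝ) : ℂ)) (h t) := by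
  classical
  set ψ : ℝ → ℂ := (Set.Icc (-L) L).indicator (hφ2.aestronglyMeasurable.mk φ) with hψdef
  have hψm : Measurable ψ := by
    have := hφ2.aestronglyMeasurable.stronglyMeasurable_mk.measurable
    exact this.indicator measurableSet_Icc
  have hψφ : ψ =ᵐ[volume] φ := by
    have h1 : φ =ᵐ[volume] hφ2.aestronglyMeasurable.mk φ := hφ2.aestronglyMeasurable.ae_eq_mk
    have h2 : (Set.Icc (-L) L).indicator φ =ᵐ[volume] ψ := by
      rw [hψdef]
      exact h1.indicator
    have h3 : (Set.Icc (-L) L).indicator φ = φ := Set.indicator_eq_self.mpr hφsupp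
    rw [h3] at h2
    exact h2.symm
  have hψ2 : MemLp ψ 2 := hφ2.ae_eq hψφ.symm
  have hψsupp : Function.support ψ ⊆ Set.Icc (-L) L := Set.support_indicator_subset
  have hψrep : ∀ s : ℝ, h s =
      ((1 / (2 * Real.pi) : ℝ) : ℂ) * ∫ ω : ℝ, ψ ω * Complex.exp (Complex.I * (ω * s)) := by
    intro s
    rw [hrep s]
    congr 1
    refine integral_congr_ae ?_
    filter_upwards [hψφ] with x hx
    rw [hx]
  exact shannon_hasSum L hL h ψ hψm hψ2 hψsupp hψrep t

/-- Shannon sampling theorem: if `h ∈ L²(ℝ)` is band-limited with Fourier transform `φ`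
supported in `[−L, L]` (i.e. `h` is the inverse Fourier transform of `φ ∈ L²` with
`supp φ ⊆ [−L, L]`), then `h(t) = Σ_{k∈ℤ} h(πk/L)·sinc(Lt − kπ)` for all `t`, and `h` is
uniquely determined by its samples `h(πk/L)`, `k ∈ ℤ`. -/
theorem statement15 (L : ℝ) (hL : 0 < L) (h : ℝ → ℂ) (hh2 : MemLp h 2)
    (φ : ℝ → ℂ) (hφ2 : MemLp φ 2) (hφsupp : Function.support φ ⊆ Set.Icc (-L) L)
    (hrep : ∀ t : ℝ, h t =
      ((1 / (2 * Real.pi) : ℝ) : ℂ) * ∫ ω : ℝ, φ ω * Complex.exp (Complex.I * (ω * t))) :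
    (∀ t : ℝ, h t = ∑' k : ℤ, h (Real.pi * k / L) * ((_root_.sinc (L * t - k * Real.pi) : ℝ) : ℂ)) ∧
    ∀ h' : ℝ → ℂ, MemLp h' 2 →
      (∃ φ' : ℝ → ℂ, MemLp φ' 2 ∧ Function.support φ' ⊆ Set.Icc (-L) L ∧
        ∀ t : ℝ, h' t =
          ((1 / (2 * Real.pi) : ℝ) : ℂ) * ∫ ω : ℝ, φ' ω * Complex.exp (Complex.I * (ω * t))) →
      (∀ k : ℤ, h' (Real.pi * k / L) = h (Real.pi * k / L)) → h' = h := by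
  constructor
  · intro t
    exact (shannon_hasSum' L hL h φ hφ2 hφsupp hrep t).tsum_eq.symm
  · rintro h' hh'2 ⟨φ', hφ'2, hφ'supp, hrep'⟩ hsamples
    funext t
    have H1 := (shannon_hasSum' L hL h φ hφ2 hφsupp hrep t).tsum_eq
    have H2 := (shannon_hasSum' L hL h' φ' hφ'2 hφ'supp hrep' t).tsum_eq
    rw [← H1, ← H2]
    congr 1
    funext k
    rw [hsamples k]
end

section
/- Iterated orthogonal projections: for j = 1,…,M let P_j be the orthogonal projection onto a linear subspace V_j ⊆ ℝ^N and set P = P_M ⋯ P_1. Then for every x ∈ ℝ^N, P^k x converges as k → ∞ to Tx, where T is the orthogonal projection onto ker(Id − P). -/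
open Filter Topology

variable {E : Type*} [NormedAddCommGroup E] [InnerProductSpace ℝ E]

lemma aux_listProd_norm_le (L : List (E →L[ℝ] E))
    (h : ∀ f ∈ L, ∀ x, ‖f x‖ ≤ ‖x‖) : ∀ x, ‖L.prod x‖ ≤ ‖x‖ := by
  induction L with
  | nil => intro x; simp
  | cons f t ih =>
    intro x
    rw [List.prod_cons, ContinuousLinearMap.mul_apply]
    exact le_trans (h f (List.mem_cons_self) _)
      (ih (fun g hg => h g (List.mem_cons_of_mem f hg)) x)

lemma aux_fix_all (L : List (E →L[ℝ] E))
    (h1 : ∀ f ∈ L, ∀ x, ‖f x‖ ≤ ‖x‖)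
    (h2 : ∀ f ∈ L, ∀ x, ‖f x‖ = ‖x‖ → f x = x)
    (x : E) (hx : ‖L.prod x‖ = ‖x‖) : ∀ f ∈ L, f x = x := by
  induction L with
  | nil => intro f hf; simp at hf
  | cons f t ih =>
    have h1t : ∀ g ∈ t, ∀ x, ‖g x‖ ≤ ‖x‖ := fun g hg => h1 g (List.mem_cons_of_mem f hg)
    have h2t : ∀ g ∈ t, ∀ x, ‖g x‖ = ‖x‖ → g x = x := fun g hg => h2 g (List.mem_cons_of_mem f hg)
    rw [List.prod_cons, ContinuousLinearMap.mul_apply] at hx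
    have hle1 : ‖f (t.prod x)‖ ≤ ‖t.prod x‖ := h1 f (List.mem_cons_self) _
    have hle2 : ‖t.prod x‖ ≤ ‖x‖ := aux_listProd_norm_le t h1t x
    have heq2 : ‖t.prod x‖ = ‖x‖ := le_antisymm hle2 (by rw [← hx]; exact hle1)
    have hall : ∀ g ∈ t, g x = x := ih h1t h2t heq2
    have hprodt : t.prod x = x := by
      clear hx hle1 hle2 heq2 ih h1 h2 h1t h2t
      induction t with
      | nil => simp
      | cons g s ihs =>
        rw [List.prod_cons, ContinuousLinearMap.mul_apply,
          ihs (fun g' hg' => hall g' (List.mem_cons_of_mem g hg'))]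
        exact hall g (List.mem_cons_self)
    intro g hg
    rcases List.mem_cons.mp hg with rfl | hg'
    · have hx' : ‖g x‖ = ‖x‖ := by rwa [hprodt] at hx
      exact h2 g (List.mem_cons_self) x hx'
    · exact hall g hg'

lemma aux_listProd_fixed (L : List (E →L[ℝ] E)) (z : E)
    (hz : ∀ f ∈ L, f z = z) : L.prod z = z := by
  induction L with
  | nil => simp
  | cons f t ih =>
    rw [List.prod_cons, ContinuousLinearMap.mul_apply,
      ih (fun g hg => hz g (List.mem_cons_of_mem f hg))]
    exact hz f (List.mem_cons_self)

lemma aux_listProd_inner (L : List (E →L[ℝ] E))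
    (hsym : ∀ f ∈ L, ∀ a b : E, (inner ℝ (f a) b : ℝ) = inner ℝ a (f b))
    (z : E) (hz : ∀ f ∈ L, f z = z) :
    ∀ y : E, (inner ℝ (L.prod y) z : ℝ) = inner ℝ y z := by
  induction L with
  | nil => intro y; simp
  | cons f t ih =>
    intro y
    rw [List.prod_cons, ContinuousLinearMap.mul_apply,
      hsym f (List.mem_cons_self), hz f (List.mem_cons_self)]
    exact ih (fun g hg => hsym g (List.mem_cons_of_mem f hg))
      (fun g hg => hz g (List.mem_cons_of_mem f hg)) y

/-- Iterated orthogonal projections: if `P_1, …, P_M` are orthogonal projections onto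
linear subspaces of `ℝ^N` and `Q = P_M ⋯ P_1`, then for every `x`, `Q^k x` converges as
`k → ∞` to `Tx`, where `T` is the orthogonal projection onto `ker(Id − Q)`. -/
theorem statement17 {N M : ℕ}
    (V : Fin M → Submodule ℝ (EuclideanSpace ℝ (Fin N)))
    (P : Fin M → EuclideanSpace ℝ (Fin N) →L[ℝ] EuclideanSpace ℝ (Fin N))
    (hP : ∀ j, P j = (V j).subtypeL.comp (Submodule.orthogonalProjectionOnto (V j)))
    (Q : EuclideanSpace ℝ (Fin N) →L[ℝ] EuclideanSpace ℝ (Fin N))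
    (hQ : Q = (List.ofFn P).reverse.prod) :
    ∀ x : EuclideanSpace ℝ (Fin N),
      Tendsto (fun k : ℕ => (Q ^ k) x) atTop
        (nhds ((LinearMap.ker ((ContinuousLinearMap.id ℝ (EuclideanSpace ℝ (Fin N)) - Q : EuclideanSpace ℝ (Fin N) →L[ℝ] EuclideanSpace ℝ (Fin N)) : EuclideanSpace ℝ (Fin N) →ₗ[ℝ] EuclideanSpace ℝ (Fin N))).subtypeL.comp
          (Submodule.orthogonalProjectionOnto
            (LinearMap.ker ((ContinuousLinearMap.id ℝ (EuclideanSpace ℝ (Fin N)) - Q : EuclideanSpace ℝ (Fin N) →L[ℝ] EuclideanSpace ℝ (Fin N)) : EuclideanSpace ℝ (Fin N) →ₗ[ℝ] EuclideanSpace ℝ (Fin N)))) x)) := by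
  set E := EuclideanSpace ℝ (Fin N)
  intro x
  set L := (List.ofFn P).reverse with hL
  have hmemL : ∀ f ∈ L, ∃ j, f = P j := by
    intro f hf
    rw [hL, List.mem_reverse, List.mem_ofFn] at hf
    obtain ⟨j, hj⟩ := hf
    exact ⟨j, hj.symm⟩
  -- basic properties of each P j
  have hPnorm : ∀ j, ∀ y : E, ‖P j y‖ ≤ ‖y‖ := by
    intro j y
    rw [hP j]
    calc ‖((V j).subtypeL.comp (Submodule.orthogonalProjectionOnto (V j))) y‖
        = ‖Submodule.orthogonalProjectionOnto (V j) y‖ := rfl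
      _ ≤ 1 * ‖y‖ := (Submodule.orthogonalProjectionOnto (V j)).le_of_opNorm_le (Submodule.orthogonalProjectionOnto_norm_le _) y
      _ = ‖y‖ := one_mul _
  have hPrigid : ∀ j, ∀ y : E, ‖P j y‖ = ‖y‖ → P j y = y := by
    intro j y hy
    rw [hP j] at hy ⊢
    have hpyth := Submodule.norm_sq_eq_add_norm_sq_projection y (V j)
    have hnorm : ‖((V j).subtypeL.comp (Submodule.orthogonalProjectionOnto (V j))) y‖
        = ‖Submodule.orthogonalProjectionOnto (V j) y‖ := rfl
    rw [hnorm] at hy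
    have h0 : ‖Submodule.orthogonalProjectionOnto (V j)ᗮ y‖ ^ 2 = 0 := by rw [hy] at hpyth; linarith
    have h0' : (V j)ᗮ.starProjection y = 0 := by
      have := pow_eq_zero_iff (n := 2) (by norm_num) |>.mp h0
      simpa [norm_eq_zero] using this
    have hsum := Submodule.starProjection_add_starProjection_orthogonal (K := V j) y
    simpa [h0'] using hsum
  have hPsym : ∀ j, ∀ a b : E, (inner ℝ ((P j) a) b : ℝ) = inner ℝ a ((P j) b) := by
    intro j a b
    rw [hP j]
    exact Submodule.inner_starProjection_left_eq_right (V j) a b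
  have h1 : ∀ f ∈ L, ∀ y : E, ‖f y‖ ≤ ‖y‖ := by
    intro f hf; obtain ⟨j, rfl⟩ := hmemL f hf; exact hPnorm j
  have h2 : ∀ f ∈ L, ∀ y : E, ‖f y‖ = ‖y‖ → f y = y := by
    intro f hf; obtain ⟨j, rfl⟩ := hmemL f hf; exact hPrigid j
  -- norm bound on Q
  have hQle : ∀ y : E, ‖Q y‖ ≤ ‖y‖ := by
    intro y; rw [hQ]; exact aux_listProd_norm_le L h1 y
  set F := LinearMap.ker ((ContinuousLinearMap.id ℝ E - Q : E →L[ℝ] E) : E →ₗ[ℝ] E) with hF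
  have hFiff : ∀ z : E, z ∈ F ↔ Q z = z := by
    intro z
    rw [hF, LinearMap.mem_ker]
    constructor
    · intro h
      have : z - Q z = 0 := h
      linear_combination (norm := module) -this
    · intro h
      show z - Q z = 0
      rw [h, sub_self]
  -- fixed points of Q are fixed by every P j
  have hfixall : ∀ z : E, Q z = z → ∀ f ∈ L, f z = z := by
    intro z hz
    have hnz : ‖L.prod z‖ = ‖z‖ := by rw [← hQ, hz]
    exact aux_fix_all L h1 h2 z hnz
  -- Fᗮ is Q-invariant
  have hQadj : ∀ z, z ∈ F → ∀ y : E, (inner ℝ (Q y) z : ℝ) = inner ℝ y z := by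
    intro z hz y
    rw [hQ]
    exact aux_listProd_inner L (fun f hf => by obtain ⟨j, rfl⟩ := hmemL f hf; exact hPsym j)
      z (hfixall z ((hFiff z).mp hz)) y
  have hinv : ∀ y ∈ Fᗮ, Q y ∈ Fᗮ := by
    intro y hy
    rw [Submodule.mem_orthogonal] at hy ⊢
    intro u hu
    rw [real_inner_comm, hQadj u hu y, real_inner_comm]
    exact hy u hu
  -- contraction constant on Fᗮ
  obtain ⟨c, hc0, hc1, hcle⟩ : ∃ c : ℝ, 0 ≤ c ∧ c < 1 ∧ ∀ y ∈ Fᗮ, ‖Q y‖ ≤ c * ‖y‖ := by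
    set S : Set E := {y : E | ‖y‖ = 1 ∧ y ∈ Fᗮ} with hS
    rcases S.eq_empty_or_nonempty with hSe | hSne
    · refine ⟨0, le_refl 0, one_pos, ?_⟩
      intro y hy
      rcases eq_or_ne y 0 with rfl | hy0
      · simp
      · exfalso
        have : (‖y‖⁻¹ • y) ∈ S := by
          constructor
          · exact norm_smul_inv_norm hy0
          · exact Submodule.smul_mem _ _ hy
        rw [hSe] at this
        exact this
    · have hScompact : IsCompact S := by
        have hclosed : IsClosed S := by
          have h1c : IsClosed {y : E | ‖y‖ = 1} := isClosed_eq continuous_norm continuous_const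
          have h2c : IsClosed (Fᗮ : Set E) := Submodule.closed_of_finiteDimensional _
          exact h1c.inter h2c
        have hsub : S ⊆ Metric.sphere 0 1 := by
          intro y hy
          simpa [mem_sphere_zero_iff_norm] using hy.1
        exact (isCompact_sphere (0 : E) 1).of_isClosed_subset hclosed hsub
      obtain ⟨y0, hy0S, hy0max⟩ := hScompact.exists_isMaxOn hSne
        ((continuous_norm.comp Q.continuous).continuousOn)
      refine ⟨‖Q y0‖, norm_nonneg _, ?_, ?_⟩
      · rcases lt_or_eq_of_le (le_of_le_of_eq (hQle y0) hy0S.1) with h | h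
        · exact h
        · exfalso
          have hQy0 : Q y0 = y0 := by
            rw [hQ]
            exact aux_listProd_fixed L y0
              (aux_fix_all L h1 h2 y0 (by rw [← hQ, h, hy0S.1]))
          have hy0F : y0 ∈ F := (hFiff y0).mpr hQy0
          have : (inner ℝ y0 y0 : ℝ) = 0 :=
            (Submodule.mem_orthogonal _ _).mp hy0S.2 y0 hy0F
          have hz0 : y0 = 0 := inner_self_eq_zero.mp this
          have h1n : ‖y0‖ = 1 := hy0S.1
          rw [hz0] at h1n
          simp at h1n
      · intro y hy
        rcases eq_or_ne y 0 with rfl | hy0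
        · simp
        · have hyS : (‖y‖⁻¹ • y) ∈ S :=
            ⟨norm_smul_inv_norm hy0, Submodule.smul_mem _ _ hy⟩
          have hle2 : ‖Q (‖y‖⁻¹ • y)‖ ≤ ‖Q y0‖ := hy0max hyS
          rw [map_smul, norm_smul, norm_inv, norm_norm] at hle2
          have hn : (0:ℝ) < ‖y‖ := norm_pos_iff.mpr hy0
          calc ‖Q y‖ = ‖y‖ * (‖y‖⁻¹ * ‖Q y‖) := by field_simp
            _ ≤ ‖y‖ * ‖Q y0‖ := by
                apply mul_le_mul_of_nonneg_left _ (le_of_lt hn)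
                exact hle2
            _ = ‖Q y0‖ * ‖y‖ := mul_comm _ _
  -- iterated bounds
  have hpow : ∀ y ∈ Fᗮ, ∀ k : ℕ, (Q ^ k) y ∈ Fᗮ ∧ ‖(Q ^ k) y‖ ≤ c ^ k * ‖y‖ := by
    intro y hy k
    induction k with
    | zero => simpa using hy
    | succ k ih =>
      have happ : (Q ^ (k + 1)) y = Q ((Q ^ k) y) := by
        rw [pow_succ']; rfl
      constructor
      · rw [happ]; exact hinv _ ih.1
      · rw [happ]
        calc ‖Q ((Q ^ k) y)‖ ≤ c * ‖(Q ^ k) y‖ := hcle _ ih.1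
          _ ≤ c * (c ^ k * ‖y‖) := mul_le_mul_of_nonneg_left ih.2 hc0
          _ = c ^ (k + 1) * ‖y‖ := by ring
  -- decompose x
  set a : E := (Submodule.orthogonalProjectionOnto F x : E) with ha
  have haF : a ∈ F := Submodule.coe_mem _
  set y : E := x - a with hy
  have hyF : y ∈ Fᗮ := Submodule.sub_starProjection_mem_orthogonal (K := F) x
  have hQa : ∀ k : ℕ, (Q ^ k) a = a := by
    intro k
    induction k with
    | zero => rfl
    | succ k ih =>
      rw [pow_succ', ContinuousLinearMap.mul_apply, ih]
      exact (hFiff a).mp haF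
  have hxsplit : ∀ k : ℕ, (Q ^ k) x = a + (Q ^ k) y := by
    intro k
    rw [hy, map_sub, hQa k]
    abel
  have htend0 : Tendsto (fun k : ℕ => (Q ^ k) y) atTop (nhds 0) := by
    apply squeeze_zero_norm (fun k => (hpow y hyF k).2)
    have : Tendsto (fun k : ℕ => c ^ k) atTop (nhds 0) :=
      tendsto_pow_atTop_nhds_zero_of_lt_one hc0 hc1
    simpa using this.mul_const ‖y‖
  have hgoalval : ((LinearMap.ker ((ContinuousLinearMap.id ℝ E - Q : E →L[ℝ] E) : E →ₗ[ℝ] E)).subtypeL.comp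
      (Submodule.orthogonalProjectionOnto (LinearMap.ker ((ContinuousLinearMap.id ℝ E - Q : E →L[ℝ] E) : E →ₗ[ℝ] E)))) x = a := rfl
  rw [hgoalval]
  have hconst : Tendsto (fun _ : ℕ => a) atTop (nhds a) := tendsto_const_nhds
  have hsum := hconst.add htend0
  rw [add_zero] at hsum
  exact hsum.congr (fun k => (hxsplit k).symm)
end

section
/- Convergence of Kaczmarz's method: let A ∈ ℝ^{M×N} with rows a_j and y ∈ ℝ^M such that Ac = y has a solution. Define Π_j u = u − ((a_jᵀu − y_j)/(a_jᵀa_j))·a_j and Π = Π_M ⋯ Π_1, and iterate c^{(k)} = Π c^{(k−1)} from a starting vector c^{(0)}. Then c^{(k)} converges to a solution c* of Ac = y; if moreover c^{(0)} lies in the range of Aᵀ (e.g. c^{(0)} = 0), then c* is the minimal Euclidean norm solution. -/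
open Matrix Filter Topology

namespace KaczmarzAux

variable {N M : ℕ}

noncomputable def step (a : Fin N → ℝ) (t : ℝ) (v : Fin N → ℝ) : Fin N → ℝ :=
  v - ((a ⬝ᵥ v - t) / (a ⬝ᵥ a)) • a

noncomputable def F (M : ℕ) (a : Fin M → Fin N → ℝ) (y : Fin M → ℝ) (u : Fin N → ℝ) :
    Fin N → ℝ :=
  Fin.foldl M (fun v j => v - ((a j ⬝ᵥ v - y j) / (a j ⬝ᵥ a j)) • a j) u

lemma dot_self_nonneg (a : Fin N → ℝ) : 0 ≤ a ⬝ᵥ a :=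
  Finset.sum_nonneg fun i _ => mul_self_nonneg (a i)

lemma dot_self_pos {a : Fin N → ℝ} (ha : a ≠ 0) : 0 < a ⬝ᵥ a :=
  lt_of_le_of_ne (dot_self_nonneg a) (fun h => ha (dotProduct_self_eq_zero.mp h.symm))

lemma coord_sq_le (v : Fin N → ℝ) (i : Fin N) : v i * v i ≤ v ⬝ᵥ v := by
  unfold dotProduct
  exact Finset.single_le_sum (fun i _ => mul_self_nonneg (v i)) (Finset.mem_univ i)

lemma step_sub (a : Fin N → ℝ) (t : ℝ) (u u' : Fin N → ℝ) :
    step a t u - step a t u' = step a 0 (u - u') := by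
  unfold step; rw [dotProduct_sub]; module

lemma step_smul (a : Fin N → ℝ) (c : ℝ) (v : Fin N → ℝ) :
    step a 0 (c • v) = c • step a 0 v := by
  unfold step; rw [dotProduct_smul]; match_scalars <;> field_simp <;> simp

lemma step_fix {a : Fin N → ℝ} {t : ℝ} {v : Fin N → ℝ} (h : a ⬝ᵥ v = t) : step a t v = v := by
  simp [step, h]

lemma q_step (a : Fin N → ℝ) (ha : a ≠ 0) (v : Fin N → ℝ) :
    step a 0 v ⬝ᵥ step a 0 v = v ⬝ᵥ v - (a ⬝ᵥ v)^2 / (a ⬝ᵥ a) := by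
  have h := (dot_self_pos ha).ne'
  unfold step
  simp only [sub_zero, sub_dotProduct, dotProduct_sub, smul_dotProduct, dotProduct_smul,
    dotProduct_comm a v, smul_eq_mul]
  field_simp; ring

lemma q_step_le (a : Fin N → ℝ) (ha : a ≠ 0) (v : Fin N → ℝ) :
    step a 0 v ⬝ᵥ step a 0 v ≤ v ⬝ᵥ v := by
  rw [q_step a ha v]
  have : 0 ≤ (a ⬝ᵥ v)^2 / (a ⬝ᵥ a) := div_nonneg (sq_nonneg _) (dot_self_pos ha).le
  linarith

lemma F_zero' {M : ℕ} (hM : M = 0) (a : Fin M → Fin N → ℝ) (y : Fin M → ℝ) (u) :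
    F M a y u = u := by subst hM; simp [F]

lemma F_succ {M : ℕ} (a : Fin (M+1) → Fin N → ℝ) (y : Fin (M+1) → ℝ) (u) :
    F (M+1) a y u = F M (a ∘ Fin.succ) (y ∘ Fin.succ) (step (a 0) (y 0) u) := by
  rw [F, Fin.foldl_succ]; rfl

lemma F_succ0 {M : ℕ} (a : Fin (M+1) → Fin N → ℝ) (u) :
    F (M+1) a 0 u = F M (a ∘ Fin.succ) 0 (step (a 0) 0 u) := F_succ a 0 u

lemma F_sub {M : ℕ} : ∀ (a : Fin M → Fin N → ℝ) (y : Fin M → ℝ) (u u' : Fin N → ℝ),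
    F M a y u - F M a y u' = F M a 0 (u - u') := by
  induction M with
  | zero => intro a y u u'; simp [F_zero' rfl]
  | succ M ih =>
      intro a y u u'
      rw [F_succ a y, F_succ a y, F_succ0, ih, step_sub]

lemma F_fix {M : ℕ} : ∀ {a : Fin M → Fin N → ℝ} {y : Fin M → ℝ} {v : Fin N → ℝ},
    (∀ j, a j ⬝ᵥ v = y j) → F M a y v = v := by
  induction M with
  | zero => intro a y v _; simp [F_zero' rfl]
  | succ M ih =>
      intro a y v h
      rw [F_succ, step_fix (h 0)]
      exact ih (fun j => h j.succ)

lemma G_zero {M : ℕ} (a : Fin M → Fin N → ℝ) : F M a 0 (0 : Fin N → ℝ) = 0 :=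
  F_fix (fun j => by simp)

lemma G_add {M : ℕ} (a : Fin M → Fin N → ℝ) (u u' : Fin N → ℝ) :
    F M a 0 (u + u') = F M a 0 u + F M a 0 u' := by
  have h1 := F_sub a 0 (u + u') u'
  simp only [add_sub_cancel_right] at h1
  linear_combination (norm := module) h1

lemma G_smul {M : ℕ} : ∀ (a : Fin M → Fin N → ℝ) (c : ℝ) (v : Fin N → ℝ),
    F M a 0 (c • v) = c • F M a 0 v := by
  induction M with
  | zero => intro a c v; simp [F_zero' rfl]
  | succ M ih =>
      intro a c v
      rw [F_succ0, F_succ0, step_smul, ih]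

lemma q_F_le {M : ℕ} : ∀ (a : Fin M → Fin N → ℝ), (∀ j, a j ≠ 0) → ∀ (v : Fin N → ℝ),
    F M a 0 v ⬝ᵥ F M a 0 v ≤ v ⬝ᵥ v := by
  induction M with
  | zero => intro a _ v; simp [F_zero' rfl]
  | succ M ih =>
      intro a ha v
      rw [F_succ0]
      exact le_trans (ih _ (fun j => ha j.succ) _) (q_step_le (a 0) (ha 0) v)

lemma q_F_eq {M : ℕ} : ∀ (a : Fin M → Fin N → ℝ), (∀ j, a j ≠ 0) → ∀ (v : Fin N → ℝ),
    F M a 0 v ⬝ᵥ F M a 0 v = v ⬝ᵥ v → ∀ j, a j ⬝ᵥ v = 0 := by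
  induction M with
  | zero => intro a _ v _ j; exact absurd j.2 (by simp)
  | succ M ih =>
      intro a ha v h
      rw [F_succ0] at h
      have h1 := ih _ (fun j => ha j.succ)
      have h2 := q_step_le (a 0) (ha 0) v
      have h3 := q_F_le (a ∘ Fin.succ) (fun j => ha j.succ) (step (a 0) 0 v)
      have hq : step (a 0) 0 v ⬝ᵥ step (a 0) 0 v = v ⬝ᵥ v := le_antisymm h2 (by linarith)
      have h0 : a 0 ⬝ᵥ v = 0 := by
        have hqs := q_step (a 0) (ha 0) v
        have hpos := dot_self_pos (ha 0)
        have hz : (a 0 ⬝ᵥ v)^2 / (a 0 ⬝ᵥ a 0) = 0 := by linarith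
        have := (div_eq_zero_iff.mp hz).resolve_right hpos.ne'
        exact pow_eq_zero_iff (by norm_num) |>.mp this
      intro j
      rcases Fin.eq_zero_or_eq_succ j with rfl | ⟨j', rfl⟩
      · exact h0
      · have hfix : step (a 0) 0 v = v := step_fix (by simpa using h0)
        rw [hfix] at h
        exact h1 v h j'

lemma F_sub_mem {M : ℕ} : ∀ (a : Fin M → Fin N → ℝ) (y : Fin M → ℝ) (u : Fin N → ℝ),
    F M a y u - u ∈ Submodule.span ℝ (Set.range a) := by
  induction M with
  | zero => intro a y u; simp [F_zero' rfl]
  | succ M ih =>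
      intro a y u
      rw [F_succ]
      have h1 := ih (a ∘ Fin.succ) (y ∘ Fin.succ) (step (a 0) (y 0) u)
      have h2 : step (a 0) (y 0) u - u ∈ Submodule.span ℝ (Set.range a) := by
        have : step (a 0) (y 0) u - u = (-((a 0 ⬝ᵥ u - y 0) / (a 0 ⬝ᵥ a 0))) • a 0 := by
          unfold step; module
        rw [this]
        exact Submodule.smul_mem _ _ (Submodule.subset_span ⟨0, rfl⟩)
      have hle : Submodule.span ℝ (Set.range (a ∘ Fin.succ)) ≤ Submodule.span ℝ (Set.range a) :=
        Submodule.span_mono (Set.range_comp_subset_range _ _)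
      have := Submodule.add_mem _ (hle h1) h2
      simpa using this

lemma F_cont {M : ℕ} : ∀ (a : Fin M → Fin N → ℝ) (y : Fin M → ℝ),
    Continuous (F M a y) := by
  induction M with
  | zero =>
      intro a y
      have : F 0 a y = id := funext fun u => F_zero' rfl a y u
      rw [this]; exact continuous_id
  | succ M ih =>
      intro a y
      have : F (M+1) a y = (F M (a ∘ Fin.succ) (y ∘ Fin.succ)) ∘ (step (a 0) (y 0)) :=
        funext fun u => F_succ a y u
      rw [this]
      refine (ih _ _).comp ?_
      unfold step
      have hd : Continuous fun v : Fin N → ℝ => a 0 ⬝ᵥ v := by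
        unfold dotProduct
        exact continuous_finset_sum _ fun i _ => (continuous_const.mul (continuous_apply i))
      exact continuous_id.sub ((((hd.sub continuous_const).div_const _).smul continuous_const))

lemma span_dot_zero (a : Fin M → Fin N → ℝ) (v : Fin N → ℝ) (h : ∀ j, a j ⬝ᵥ v = 0) :
    ∀ u ∈ Submodule.span ℝ (Set.range a), u ⬝ᵥ v = 0 := by
  intro u hu
  induction hu using Submodule.span_induction with
  | mem x hx => obtain ⟨j, rfl⟩ := hx; exact h j
  | zero => simp
  | add x y _ _ hx hy => rw [add_dotProduct, hx, hy, add_zero]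
  | smul c x _ hx => rw [smul_dotProduct, hx, smul_zero]

lemma decomp (a : Fin M → Fin N → ℝ) (x : Fin N → ℝ) :
    ∃ w v : Fin N → ℝ, x = w + v ∧ (∀ j, a j ⬝ᵥ w = 0) ∧
      v ∈ Submodule.span ℝ (Set.range a) := by
  set e : (Fin N → ℝ) ≃ₗ[ℝ] EuclideanSpace ℝ (Fin N) :=
    (WithLp.linearEquiv 2 ℝ (Fin N → ℝ)).symm with he
  have hdot : ∀ u w : Fin N → ℝ, inner ℝ (e u) (e w) = u ⬝ᵥ w := by
    intro u w
    have := EuclideanSpace.inner_toLp_toLp (𝕜 := ℝ) (ι := Fin N) u w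
    simpa [e, dotProduct_comm] using this
  set W : Submodule ℝ (EuclideanSpace ℝ (Fin N)) :=
    Submodule.span ℝ (Set.range (fun j => e (a j))) with hW
  set v' : EuclideanSpace ℝ (Fin N) := (W.starProjection (e x) : EuclideanSpace ℝ (Fin N))
    with hv'
  refine ⟨e.symm (e x - v'), e.symm v', ?_, ?_, ?_⟩
  · have h : e x = (e x - v') + v' := by abel
    calc x = e.symm (e x) := (e.symm_apply_apply x).symm
    _ = e.symm ((e x - v') + v') := by rw [← h]
    _ = e.symm (e x - v') + e.symm v' := by rw [map_add]
  · intro j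
    have hmem : e x - v' ∈ Wᗮ := W.sub_starProjection_mem_orthogonal (e x)
    have haj : e (a j) ∈ W := Submodule.subset_span ⟨j, rfl⟩
    have h0 : inner ℝ (e (a j)) (e x - v') = (0 : ℝ) :=
      (Submodule.mem_orthogonal W _).mp hmem _ haj
    have h1 := hdot (a j) (e.symm (e x - v'))
    rw [e.apply_symm_apply] at h1
    rw [← h1, h0]
  · have hv : v' ∈ W := W.starProjection_apply_mem (e x)
    have hmap : e.symm v' ∈ W.map e.symm.toLinearMap := ⟨v', hv, rfl⟩
    rw [hW, Submodule.map_span] at hmap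
    have himg : (e.symm.toLinearMap '' Set.range fun j => e (a j)) = Set.range a := by
      ext u
      constructor
      · rintro ⟨_, ⟨j, rfl⟩, rfl⟩; exact ⟨j, (e.symm_apply_apply _)⟩
      · rintro ⟨j, rfl⟩; exact ⟨e (a j), ⟨j, rfl⟩, e.symm_apply_apply _⟩
    rwa [himg] at hmap

lemma q_cont : Continuous fun v : Fin N → ℝ => v ⬝ᵥ v := by
  unfold dotProduct
  exact continuous_finset_sum _ fun i _ => (continuous_apply i).mul (continuous_apply i)

lemma q_smul (c : ℝ) (v : Fin N → ℝ) : (c • v) ⬝ᵥ (c • v) = c^2 * (v ⬝ᵥ v) := by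
  rw [smul_dotProduct, dotProduct_smul, smul_eq_mul, smul_eq_mul]; ring

lemma sphere_compact (W : Submodule ℝ (Fin N → ℝ)) :
    IsCompact {v : Fin N → ℝ | v ∈ W ∧ v ⬝ᵥ v = 1} := by
  have hclosed : IsClosed {v : Fin N → ℝ | v ∈ W ∧ v ⬝ᵥ v = 1} := by
    have h : {v : Fin N → ℝ | v ∈ W ∧ v ⬝ᵥ v = 1}
        = (W : Set (Fin N → ℝ)) ∩ {v | v ⬝ᵥ v = 1} := rfl
    rw [h]
    exact (Submodule.closed_of_finiteDimensional W).inter (isClosed_eq q_cont continuous_const)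
  have hbdd : {v : Fin N → ℝ | v ∈ W ∧ v ⬝ᵥ v = 1} ⊆ Metric.closedBall 0 1 := by
    rintro v ⟨-, hq⟩
    rw [Metric.mem_closedBall, dist_zero_right]
    have hcoord : ∀ i, ‖v i‖ ≤ 1 := by
      intro i
      have h := coord_sq_le v i
      rw [hq] at h
      rw [Real.norm_eq_abs]
      nlinarith [abs_nonneg (v i), sq_abs (v i)]
    exact pi_norm_le_iff_of_nonneg zero_le_one |>.mpr hcoord
  exact (Metric.isCompact_of_isClosed_isBounded hclosed
    ((Metric.isBounded_closedBall).subset hbdd))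

lemma exists_r (a : Fin M → Fin N → ℝ) (ha : ∀ j, a j ≠ 0) :
    ∃ r : ℝ, 0 ≤ r ∧ r < 1 ∧ ∀ v ∈ Submodule.span ℝ (Set.range a),
      F M a 0 v ⬝ᵥ F M a 0 v ≤ r * (v ⬝ᵥ v) := by
  set W := Submodule.span ℝ (Set.range a) with hW
  by_cases hne : {v : Fin N → ℝ | v ∈ W ∧ v ⬝ᵥ v = 1}.Nonempty
  · obtain ⟨v₀, hv₀, hmax⟩ := (sphere_compact W).exists_isMaxOn hne
      ((q_cont.comp (F_cont a 0)).continuousOn)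
    refine ⟨F M a 0 v₀ ⬝ᵥ F M a 0 v₀, dot_self_nonneg _, ?_, ?_⟩
    · have hle : F M a 0 v₀ ⬝ᵥ F M a 0 v₀ ≤ 1 := hv₀.2 ▸ q_F_le a ha v₀
      rcases lt_or_eq_of_le hle with h | h
      · exact h
      · exfalso
        have heq : F M a 0 v₀ ⬝ᵥ F M a 0 v₀ = v₀ ⬝ᵥ v₀ := by rw [h, hv₀.2]
        have hz := q_F_eq a ha v₀ heq
        have h2 := span_dot_zero a v₀ hz v₀ hv₀.1
        rw [hv₀.2] at h2
        exact one_ne_zero h2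
    · intro v hv
      rcases eq_or_ne v 0 with rfl | hv0
      · simp [G_zero]
      · have hq : 0 < v ⬝ᵥ v := dot_self_pos hv0
        set s := Real.sqrt (v ⬝ᵥ v) with hs
        have hs0 : 0 < s := Real.sqrt_pos.mpr hq
        have hs2 : s^2 = v ⬝ᵥ v := Real.sq_sqrt hq.le
        have hv' : (s⁻¹ • v) ∈ W := W.smul_mem _ hv
        have hinv : (s⁻¹)^2 * (v ⬝ᵥ v) = 1 := by
          rw [← hs2]; field_simp
        have hq' : (s⁻¹ • v) ⬝ᵥ (s⁻¹ • v) = 1 := by rw [q_smul]; exact hinv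
        have hb := hmax (Set.mem_setOf.mpr ⟨hv', hq'⟩)
        simp only [Function.comp_apply, Set.mem_setOf_eq] at hb
        rw [G_smul, q_smul] at hb
        nlinarith [mul_le_mul_of_nonneg_right hb hq.le, hinv,
          dot_self_nonneg (F M a 0 v)]
  · refine ⟨0, le_refl 0, zero_lt_one, ?_⟩
    intro v hv
    rcases eq_or_ne v 0 with rfl | hv0
    · simp [G_zero]
    · exfalso
      have hq : 0 < v ⬝ᵥ v := dot_self_pos hv0
      set s := Real.sqrt (v ⬝ᵥ v) with hs
      have hs0 : 0 < s := Real.sqrt_pos.mpr hq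
      have hs2 : s^2 = v ⬝ᵥ v := Real.sq_sqrt hq.le
      have hinv : (s⁻¹)^2 * (v ⬝ᵥ v) = 1 := by rw [← hs2]; field_simp
      exact hne ⟨s⁻¹ • v, W.smul_mem _ hv, by rw [q_smul]; exact hinv⟩

end KaczmarzAux

open KaczmarzAux in
/-- Convergence of Kaczmarz's method: let `a_1, …, a_M` be the (nonzero) rows of a matrix
`A` and `y ∈ ℝ^M` with `Ac = y` solvable. With `Π_j u = u − ((a_jᵀu − y_j)/(a_jᵀa_j))·a_j`
and `Π = Π_M ⋯ Π_1`, the iterates `c^{(k)} = Π^k c^{(0)}` converge to a solution `c*` of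
`Ac = y`; if `c^{(0)}` lies in the range of `Aᵀ` (the span of the rows), `c*` is the
minimal Euclidean norm solution. -/
theorem statement18 {M N : ℕ} (a : Fin M → Fin N → ℝ) (y : Fin M → ℝ)
    (ha : ∀ j, a j ≠ 0) (hsol : ∃ c : Fin N → ℝ, ∀ j, a j ⬝ᵥ c = y j)
    (c₀ : Fin N → ℝ) :
    ∃ cstar : Fin N → ℝ, (∀ j, a j ⬝ᵥ cstar = y j) ∧
      Tendsto (fun k : ℕ =>
          (fun u : Fin N → ℝ =>
            Fin.foldl M (fun v j => v - ((a j ⬝ᵥ v - y j) / (a j ⬝ᵥ a j)) • a j) u)^[k] c₀)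
        atTop (nhds cstar) ∧
      (c₀ ∈ Submodule.span ℝ (Set.range a) →
        ∀ c : Fin N → ℝ, (∀ j, a j ⬝ᵥ c = y j) → cstar ⬝ᵥ cstar ≤ c ⬝ᵥ c) := by
  obtain ⟨cs, hcs⟩ := hsol
  obtain ⟨w, v, hx, hw, hv⟩ := decomp a (c₀ - cs)
  obtain ⟨r, hr0, hr1, hrb⟩ := exists_r a ha
  set W := Submodule.span ℝ (Set.range a) with hWdef
  set G := F M a 0 with hG
  -- the affine iteration identity
  have haff : ∀ u, F M a y u = cs + G (u - cs) := by
    intro u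
    have h1 := F_sub a y u cs
    rw [F_fix hcs] at h1
    rw [← hG] at h1
    linear_combination (norm := module) h1
  have hGw : G w = w := F_fix (fun j => by simpa using hw j)
  have hGadd : ∀ u u', G (u + u') = G u + G u' := G_add a
  have hiter : ∀ k, (F M a y)^[k] c₀ = (cs + w) + G^[k] v := by
    intro k
    induction k with
    | zero =>
        simp only [Function.iterate_zero, id_eq]
        have : c₀ - cs = w + v := hx
        linear_combination (norm := module) this
    | succ k ihk =>
        rw [Function.iterate_succ_apply', ihk, haff]
        have h2 : (cs + w) + G^[k] v - cs = w + G^[k] v := by abel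
        rw [h2, hGadd, hGw, Function.iterate_succ_apply']
        abel
  -- membership and norm bound for the iterates
  have hmb : ∀ k, G^[k] v ∈ W ∧ G^[k] v ⬝ᵥ G^[k] v ≤ r^k * (v ⬝ᵥ v) := by
    intro k
    induction k with
    | zero => simpa using hv
    | succ k ihk =>
        obtain ⟨hm, hb⟩ := ihk
        constructor
        · rw [Function.iterate_succ_apply']
          have h1 := F_sub_mem a 0 (G^[k] v)
          have h2 : G (G^[k] v) = (G (G^[k] v) - G^[k] v) + G^[k] v := by abel
          rw [h2]
          exact W.add_mem h1 hm
        · rw [Function.iterate_succ_apply']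
          have h1 := hrb _ hm
          have h2 : r * (G^[k] v ⬝ᵥ G^[k] v) ≤ r * (r^k * (v ⬝ᵥ v)) :=
            mul_le_mul_of_nonneg_left hb hr0
          calc G (G^[k] v) ⬝ᵥ G (G^[k] v) ≤ r * (G^[k] v ⬝ᵥ G^[k] v) := h1
          _ ≤ r * (r^k * (v ⬝ᵥ v)) := h2
          _ = r^(k+1) * (v ⬝ᵥ v) := by ring
  refine ⟨cs + w, ?_, ?_, ?_⟩
  · intro j
    rw [dotProduct_add, hcs j, hw j, add_zero]
  · -- convergence
    have hG0 : Tendsto (fun k => G^[k] v) atTop (𝓝 0) := by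
      rw [tendsto_pi_nhds]
      intro i
      have hpow : Tendsto (fun k : ℕ => r^k * (v ⬝ᵥ v)) atTop (𝓝 0) := by
        have := (tendsto_pow_atTop_nhds_zero_of_lt_one hr0 hr1).mul_const (v ⬝ᵥ v)
        simpa using this
      have hsq : Tendsto (fun k => (G^[k] v) i * (G^[k] v) i) atTop (𝓝 0) :=
        squeeze_zero (fun k => mul_self_nonneg _)
          (fun k => le_trans (coord_sq_le _ i) (hmb k).2) hpow
      have habs : Tendsto (fun k => |(G^[k] v) i|) atTop (𝓝 0) := by
        have h := (Real.continuous_sqrt.tendsto 0).comp hsq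
        simpa [Function.comp_def, Real.sqrt_mul_self_eq_abs] using h
      have := squeeze_zero_norm (f := fun k => (G^[k] v) i)
        (fun k => le_of_eq (Real.norm_eq_abs _)) habs
      simpa using this
    have hlim : Tendsto (fun k => (cs + w) + G^[k] v) atTop (𝓝 (cs + w)) := by
      have := tendsto_const_nhds (x := cs + w) (f := atTop (α := ℕ)) |>.add hG0
      simpa using this
    show Tendsto (fun k : ℕ => (F M a y)^[k] c₀) atTop (𝓝 (cs + w))
    have hfun : (fun k : ℕ => (F M a y)^[k] c₀) = fun k => (cs + w) + G^[k] v :=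
      funext hiter
    rw [hfun]
    exact hlim
  · -- minimality
    intro hc₀ c hc
    have hcstar_mem : cs + w ∈ W := by
      have h1 : cs + w = c₀ - v := by
        have h := hx
        linear_combination (norm := module) -h
      rw [h1]
      exact W.sub_mem hc₀ hv
    set d := c - (cs + w) with hddef
    have hcd : c = (cs + w) + d := by rw [hddef]; abel
    have hd : ∀ j, a j ⬝ᵥ d = 0 := by
      intro j
      rw [hddef, dotProduct_sub, hc j, dotProduct_add, hcs j, hw j, add_zero, sub_self]
    have horth : (cs + w) ⬝ᵥ d = 0 := span_dot_zero a d hd (cs + w) hcstar_mem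
    have hdd : 0 ≤ d ⬝ᵥ d := dot_self_nonneg _
    have hkey : c ⬝ᵥ c = (cs + w) ⬝ᵥ (cs + w) + d ⬝ᵥ d := by
      rw [hcd]
      simp only [add_dotProduct, dotProduct_add]
      have h1 : cs ⬝ᵥ d + w ⬝ᵥ d = 0 := by rw [← add_dotProduct]; exact horth
      have h2 : d ⬝ᵥ cs = cs ⬝ᵥ d := dotProduct_comm _ _
      have h3 : d ⬝ᵥ w = w ⬝ᵥ d := dotProduct_comm _ _
      linarith
    rw [hkey]
    linarith
end

section
/- n-dimensional Fourier slice theorem for the X-ray transform: for f in the Schwartz space S(ℝⁿ), θ ∈ S^{n−1} and y ∈ θ^⊥, the (n−1)-dimensional Fourier transform of Pf(θ,·) on the hyperplane θ^⊥ satisfies F(Pf)(θ,y) = Ff(y), where Ff is the n-dimensional Fourier transform of f. -/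
set_option maxHeartbeats 1000000


open MeasureTheory

/-- n-dimensional Fourier slice theorem for the X-ray transform: for `f` Schwartz on `ℝⁿ`,
`θ` a unit vector and `y ∈ θ^⊥`, the `(n−1)`-dimensional Fourier transform of `Pf(θ,·)`
on the hyperplane `θ^⊥` satisfies `F(Pf)(θ,y) = Ff(y)`, where
`Pf(θ,x) = ∫ℝ f(x + tθ) dt`. -/
theorem statement19 {n : ℕ} (f : SchwartzMap (EuclideanSpace ℝ (Fin n)) ℂ)
    (θ : EuclideanSpace ℝ (Fin n)) (hθ : ‖θ‖ = 1)
    (y : EuclideanSpace ℝ (Fin n)) (hy : y ∈ (ℝ ∙ θ)ᗮ) :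
    (∫ x : (ℝ ∙ θ)ᗮ,
        (∫ t : ℝ, f ((x : EuclideanSpace ℝ (Fin n)) + t • θ)) *
          Complex.exp (-Complex.I *
            ((inner ℝ (x : EuclideanSpace ℝ (Fin n)) y : ℝ) : ℂ))) =
      ∫ z : EuclideanSpace ℝ (Fin n),
        f z * Complex.exp (-Complex.I * ((inner ℝ z y : ℝ) : ℂ)) := by
  classical
  set K : Submodule ℝ (EuclideanSpace ℝ (Fin n)) := (ℝ ∙ θ)ᗮ with hKdef
  set m := Module.finrank ℝ K with hm
  let bK : OrthonormalBasis (Fin m) ℝ K := stdOrthonormalBasis ℝ K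
  -- orthonormal family extending bK by θ
  let v : Fin (m + 1) → EuclideanSpace ℝ (Fin n) := Fin.snoc (fun i => (bK i : _)) θ
  have hθK : ∀ x : K, (inner ℝ θ (x : EuclideanSpace ℝ (Fin n)) : ℝ) = 0 := by
    intro x
    exact (Submodule.mem_orthogonal _ _).1 x.2 θ (Submodule.mem_span_singleton_self θ)
  have hv_on : Orthonormal ℝ v := by
    rw [orthonormal_iff_ite]
    intro i j
    refine Fin.lastCases ?_ ?_ i
    · refine Fin.lastCases ?_ ?_ j
      · simp only [v, Fin.snoc_last, if_pos rfl]
        rw [real_inner_self_eq_norm_mul_norm, hθ, mul_one]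
        norm_num
      · intro j
        simp only [v, Fin.snoc_last, Fin.snoc_castSucc]
        rw [hθK (bK j)]
        simp [(Fin.castSucc_lt_last j).ne']
    · intro i
      refine Fin.lastCases ?_ ?_ j
      · simp only [v, Fin.snoc_last, Fin.snoc_castSucc]
        rw [real_inner_comm, hθK (bK i)]
        simp [(Fin.castSucc_lt_last i).ne]
      · intro j
        simp only [v, Fin.snoc_castSucc]
        rw [← Submodule.coe_inner, orthonormal_iff_ite.1 bK.orthonormal i j]
        simp [Fin.castSucc_inj]
  have hv_sp : ⊤ ≤ Submodule.span ℝ (Set.range v) := by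
    have h1 : (ℝ ∙ θ) ≤ Submodule.span ℝ (Set.range v) := by
      rw [Submodule.span_singleton_le_iff_mem]
      exact Submodule.subset_span ⟨Fin.last m, by simp [v, Fin.snoc_last]⟩
    have h2 : K ≤ Submodule.span ℝ (Set.range v) := by
      intro z hz
      have h0 : (⟨z, hz⟩ : K) = ∑ i, bK.repr ⟨z, hz⟩ i • bK i := (bK.sum_repr _).symm
      have hz' : z = ∑ i, bK.repr ⟨z, hz⟩ i • (bK i : EuclideanSpace ℝ (Fin n)) := by
        calc z = ((⟨z, hz⟩ : K) : EuclideanSpace ℝ (Fin n)) := rfl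
        _ = ((∑ i, bK.repr ⟨z, hz⟩ i • bK i : K) : EuclideanSpace ℝ (Fin n)) := by rw [← h0]
        _ = ∑ i, bK.repr ⟨z, hz⟩ i • (bK i : EuclideanSpace ℝ (Fin n)) := by push_cast; rfl
      rw [hz']
      exact Submodule.sum_mem _ fun i _ => Submodule.smul_mem _ _
        (Submodule.subset_span ⟨Fin.castSucc i, by simp [v, Fin.snoc_castSucc]⟩)
    have htop : (ℝ ∙ θ) ⊔ K = ⊤ := Submodule.sup_orthogonal_of_hasOrthogonalProjection
    rw [← htop]
    exact sup_le h1 h2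
  let b : OrthonormalBasis (Fin (m + 1)) ℝ (EuclideanSpace ℝ (Fin n)) :=
    OrthonormalBasis.mk hv_on hv_sp
  have hb : ∀ i, b i = v i := fun i => by simp [b]
  -- key algebraic identity
  have key : ∀ (x : K) (t : ℝ),
      b.repr.symm ((WithLp.equiv 2 (Fin (m + 1) → ℝ)).symm
        (Fin.snoc (fun i => bK.repr x i) t)) = (x : EuclideanSpace ℝ (Fin n)) + t • θ := by
    intro x t
    rw [← b.sum_repr_symm]
    simp_rw [WithLp.equiv_symm_apply]
    rw [Fin.sum_univ_castSucc]
    simp only [Fin.snoc_castSucc, Fin.snoc_last, hb]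
    have h1 : ∑ i : Fin m, bK.repr x i • v (Fin.castSucc i)
        = (x : EuclideanSpace ℝ (Fin n)) := by
      have h2 := congrArg (Subtype.val : K → EuclideanSpace ℝ (Fin n)) (bK.sum_repr x)
      rw [← h2]
      push_cast
      refine Finset.sum_congr rfl fun i _ => ?_
      simp [v, Fin.snoc_castSucc]
    rw [h1]
    simp [v, Fin.snoc_last]
  -- the measurable equivalence (K × ℝ) ≃ᵐ E
  let ψ : (K × ℝ) ≃ᵐ EuclideanSpace ℝ (Fin n) :=
    ((bK.measurableEquiv.prodCongr (MeasurableEquiv.refl ℝ)).trans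
      (((MeasurableEquiv.toLp 2 (Fin m → ℝ)).symm.prodCongr (MeasurableEquiv.refl ℝ)).trans
        ((MeasurableEquiv.prodComm).trans
          (((MeasurableEquiv.piFinSuccAbove (fun _ : Fin (m + 1) => ℝ) (Fin.last m)).symm).trans
            (((MeasurableEquiv.toLp 2 (Fin (m + 1) → ℝ))).trans
              b.measurableEquiv.symm)))))
  have hψmp : MeasurePreserving ψ volume volume := by
    exact (bK.measurePreserving_measurableEquiv.prod (MeasurePreserving.id volume)).trans <|
      ((EuclideanSpace.volume_preserving_symm_measurableEquiv_toLp (Fin m)).prod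
        (MeasurePreserving.id volume)).trans <|
      (Measure.measurePreserving_swap (μ := volume) (ν := volume)).trans <|
      ((volume_preserving_piFinSuccAbove (fun _ : Fin (m + 1) => ℝ) (Fin.last m)).symm).trans <|
      ((EuclideanSpace.volume_preserving_symm_measurableEquiv_toLp (Fin (m + 1))).symm).trans
      b.measurePreserving_measurableEquiv.symm
  have hψ : ∀ p : K × ℝ, ψ p = (p.1 : EuclideanSpace ℝ (Fin n)) + p.2 • θ := by
    rintro ⟨x, t⟩
    have h3 : ψ (x, t) = b.repr.symm ((WithLp.equiv 2 (Fin (m + 1) → ℝ)).symm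
        ((Fin.last m).insertNth t (fun i => bK.repr x i))) := rfl
    rw [h3, Fin.insertNth_last', key]
  -- the inner product with y only sees the K-component
  have hθy : (inner ℝ θ y : ℝ) = 0 :=
    (Submodule.mem_orthogonal _ _).1 hy θ (Submodule.mem_span_singleton_self θ)
  have hinner : ∀ p : K × ℝ,
      (inner ℝ ((p.1 : EuclideanSpace ℝ (Fin n)) + p.2 • θ) y : ℝ)
        = inner ℝ (p.1 : EuclideanSpace ℝ (Fin n)) y := by
    rintro ⟨x, t⟩
    rw [inner_add_left, real_inner_smul_left, hθy, mul_zero, add_zero]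
  -- integrability of the full integrand on the product
  have hint : Integrable (fun p : K × ℝ =>
      f ((p.1 : EuclideanSpace ℝ (Fin n)) + p.2 • θ) *
        Complex.exp (-Complex.I * ((inner ℝ (p.1 : EuclideanSpace ℝ (Fin n)) y : ℝ) : ℂ)))
      (volume : Measure (K × ℝ)) := by
    have hfi : Integrable f (volume : Measure (EuclideanSpace ℝ (Fin n))) := f.integrable
    have hcomp : Integrable
        (fun p : K × ℝ => f ((p.1 : EuclideanSpace ℝ (Fin n)) + p.2 • θ)) volume := by
      have h4 := (hψmp.integrable_comp_emb ψ.measurableEmbedding (g := fun z => f z)).2 hfi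
      refine h4.congr (Filter.Eventually.of_forall fun p => ?_)
      simp [Function.comp, hψ p]
    have hcont : Continuous (fun p : K × ℝ =>
        f ((p.1 : EuclideanSpace ℝ (Fin n)) + p.2 • θ) *
          Complex.exp (-Complex.I * ((inner ℝ (p.1 : EuclideanSpace ℝ (Fin n)) y : ℝ) : ℂ))) := by
      refine Continuous.mul ?_ ?_
      · exact f.continuous.comp ((continuous_subtype_val.comp continuous_fst).add
          (continuous_snd.smul continuous_const))
      · exact Complex.continuous_exp.comp (continuous_const.mul
          (Complex.continuous_ofReal.comp
            ((continuous_subtype_val.comp continuous_fst).inner continuous_const)))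
    refine (hcomp.norm.mono' hcont.aestronglyMeasurable
      (Filter.Eventually.of_forall fun p => ?_))
    rw [norm_mul]
    have h5 : ‖Complex.exp (-Complex.I *
        ((inner ℝ (p.1 : EuclideanSpace ℝ (Fin n)) y : ℝ) : ℂ))‖ = 1 := by
      rw [Complex.norm_exp]
      simp
    rw [h5, mul_one]
  -- put everything together
  calc (∫ x : K, (∫ t : ℝ, f ((x : EuclideanSpace ℝ (Fin n)) + t • θ)) *
          Complex.exp (-Complex.I * ((inner ℝ (x : EuclideanSpace ℝ (Fin n)) y : ℝ) : ℂ)))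
      = ∫ x : K, ∫ t : ℝ, f ((x : EuclideanSpace ℝ (Fin n)) + t • θ) *
          Complex.exp (-Complex.I * ((inner ℝ (x : EuclideanSpace ℝ (Fin n)) y : ℝ) : ℂ)) := by
        refine integral_congr_ae (Filter.Eventually.of_forall fun x => ?_)
        exact (integral_mul_const _ _).symm
    _ = ∫ p : K × ℝ, f ((p.1 : EuclideanSpace ℝ (Fin n)) + p.2 • θ) *
          Complex.exp (-Complex.I *
            ((inner ℝ (p.1 : EuclideanSpace ℝ (Fin n)) y : ℝ) : ℂ)) := by
        exact (integral_prod _ hint).symm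
    _ = ∫ p : K × ℝ, (fun z : EuclideanSpace ℝ (Fin n) =>
          f z * Complex.exp (-Complex.I * ((inner ℝ z y : ℝ) : ℂ))) (ψ p) := by
        refine integral_congr_ae (Filter.Eventually.of_forall fun p => ?_)
        simp only [hψ p, hinner p]
    _ = ∫ z : EuclideanSpace ℝ (Fin n),
          f z * Complex.exp (-Complex.I * ((inner ℝ z y : ℝ) : ℂ)) := by
        exact hψmp.integral_comp ψ.measurableEmbedding
          (fun z => f z * Complex.exp (-Complex.I * ((inner ℝ z y : ℝ) : ℂ)))
end
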